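/- arXiv:1809.05665 — 6 statements merged into one kernel-verified Lean document; each statement's English description precedes it below -/
import Mathlib

section
/- Let 0 < p < 4 and ω² = p/4 with ω ∈ (−1,1). Then the map λ ↦ Q(Φ_λ) = −λ·∫_ℝ φ_λ(x)² dx, defined for λ ∈ (−1,1), is differentiable at λ = ω and its derivative there equals 0. -/
open MeasureTheory Real Filter

/-- The explicit ground state `φ_ω` of `-φ'' + (1-ω²)φ = φ^{p+1}`. -/
noncomputable def phi (p ω : ℝ) : ℝ → ℝ := fun x =>
  ((p + 2) * (1 - ω ^ 2) / 2) ^ (1 / p) *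
    Real.cosh (p / 2 * Real.sqrt (1 - ω ^ 2) * x) ^ (-(2 / p))

lemma integral_phi_sq (p : ℝ) (hp : 0 < p) (l : ℝ) (hl : 0 < 1 - l ^ 2) :
    ∫ x : ℝ, (phi p l x) ^ 2 =
      (((p + 2) / 2) ^ (2 / p) * (2 / p) * (∫ x : ℝ, Real.cosh x ^ (-(4 / p)))) *
        ((1 - l ^ 2) ^ (2 / p) * (1 - l ^ 2) ^ (-(1/2) : ℝ)) := by
  have hC : (0:ℝ) ≤ (p + 2) * (1 - l ^ 2) / 2 := by positivity
  have hk : 0 < p / 2 * Real.sqrt (1 - l ^ 2) := by positivity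
  have step1 : ∀ x : ℝ, (phi p l x) ^ 2 =
      ((p + 2) * (1 - l ^ 2) / 2) ^ (2 / p) *
        Real.cosh (p / 2 * Real.sqrt (1 - l ^ 2) * x) ^ (-(4 / p)) := by
    intro x
    have hcosh : (0:ℝ) < Real.cosh (p / 2 * Real.sqrt (1 - l ^ 2) * x) := Real.cosh_pos _
    rw [phi, mul_pow, ← Real.rpow_natCast (((p + 2) * (1 - l ^ 2) / 2) ^ (1 / p)) 2,
      ← Real.rpow_natCast (Real.cosh (p / 2 * Real.sqrt (1 - l ^ 2) * x) ^ (-(2 / p))) 2,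
      ← Real.rpow_mul hC, ← Real.rpow_mul hcosh.le]
    congr 1
    · congr 1
      push_cast
      ring
    · congr 1
      push_cast
      ring
  have step2 : ∫ x : ℝ, (phi p l x) ^ 2 =
      ((p + 2) * (1 - l ^ 2) / 2) ^ (2 / p) *
        ∫ x : ℝ, Real.cosh (p / 2 * Real.sqrt (1 - l ^ 2) * x) ^ (-(4 / p)) := by
    simp_rw [step1]; exact integral_const_mul _ _
  rw [step2, MeasureTheory.Measure.integral_comp_mul_left
      (fun y => Real.cosh y ^ (-(4 / p))) (p / 2 * Real.sqrt (1 - l ^ 2))]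
  have habs : |(p / 2 * Real.sqrt (1 - l ^ 2))⁻¹| = (p / 2 * Real.sqrt (1 - l ^ 2))⁻¹ :=
    abs_of_pos (by positivity)
  rw [habs, smul_eq_mul]
  have h1 : ((p + 2) * (1 - l ^ 2) / 2) ^ (2 / p)
      = ((p + 2) / 2) ^ (2 / p) * (1 - l ^ 2) ^ (2 / p) := by
    rw [show (p + 2) * (1 - l ^ 2) / 2 = ((p + 2) / 2) * (1 - l ^ 2) by ring,
      Real.mul_rpow (by positivity) hl.le]
  have h2 : (p / 2 * Real.sqrt (1 - l ^ 2))⁻¹ = (2 / p) * (1 - l ^ 2) ^ (-(1/2) : ℝ) := by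
    rw [mul_inv, Real.sqrt_eq_rpow, ← Real.rpow_neg hl.le]
    ring_nf
  rw [h1, h2]; ring

/-- The map `λ ↦ Q(Φ_λ) = -λ ∫ φ_λ²` is differentiable at the critical
frequency `ω` (with `ω² = p/4`) and its derivative there is `0`. -/
theorem partialQ_zero_at_critical (p ω : ℝ) (hp : 0 < p) (hp4 : p < 4)
    (hω1 : -1 < ω) (hω2 : ω < 1) (hcrit : ω ^ 2 = p / 4) :
    HasDerivAt (fun l : ℝ => -l * ∫ x : ℝ, (phi p l x) ^ 2) 0 ω := by
  set B : ℝ := ((p + 2) / 2) ^ (2 / p) * (2 / p) * (∫ x : ℝ, Real.cosh x ^ (-(4 / p))) with hB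
  have ha : 0 < 1 - ω ^ 2 := by nlinarith
  -- eventual equality
  have hev : (fun l : ℝ => -l * ∫ x : ℝ, (phi p l x) ^ 2)
      =ᶠ[nhds ω] fun l : ℝ => -l * (B * ((1 - l ^ 2) ^ (2 / p) * (1 - l ^ 2) ^ (-(1/2) : ℝ))) := by
    have hopen : IsOpen {l : ℝ | 0 < 1 - l ^ 2} := by
      have : Continuous fun l : ℝ => 1 - l ^ 2 := by continuity
      exact isOpen_lt continuous_const this
    filter_upwards [hopen.mem_nhds ha] with l hl
    rw [integral_phi_sq p hp l hl]
  -- derivative of explicit function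
  have h1 : HasDerivAt (fun l : ℝ => 1 - l ^ 2) (-(2 * ω ^ 1)) ω :=
    (hasDerivAt_pow 2 ω).const_sub 1
  have h2 : HasDerivAt (fun l : ℝ => (1 - l ^ 2) ^ (2 / p))
      (-(2 * ω ^ 1) * (2 / p) * (1 - ω ^ 2) ^ (2 / p - 1)) ω :=
    h1.rpow_const (Or.inl ha.ne')
  have h3 : HasDerivAt (fun l : ℝ => (1 - l ^ 2) ^ (-(1/2) : ℝ))
      (-(2 * ω ^ 1) * (-(1/2) : ℝ) * (1 - ω ^ 2) ^ ((-(1/2) : ℝ) - 1)) ω :=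
    h1.rpow_const (Or.inl ha.ne')
  have h4 := (h2.mul h3).const_mul B
  have h5 : HasDerivAt (fun l : ℝ => -l) (-1) ω := (hasDerivAt_id ω).neg
  have h6 := h5.mul h4
  have hD : (-1) * (B * ((1 - ω ^ 2) ^ (2 / p) * (1 - ω ^ 2) ^ (-(1/2) : ℝ)))
      + (-ω) * (B * (-(2 * ω ^ 1) * (2 / p) * (1 - ω ^ 2) ^ (2 / p - 1) *
          (1 - ω ^ 2) ^ (-(1/2) : ℝ)
        + (1 - ω ^ 2) ^ (2 / p) *
          (-(2 * ω ^ 1) * (-(1/2) : ℝ) * (1 - ω ^ 2) ^ ((-(1/2) : ℝ) - 1)))) = 0 := by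
    rw [Real.rpow_sub_one ha.ne' (2 / p), Real.rpow_sub_one ha.ne' (-(1/2) : ℝ)]
    set X := (1 - ω ^ 2) ^ (2 / p)
    set Y := (1 - ω ^ 2) ^ (-(1/2) : ℝ)
    have hane : (1 - ω ^ 2) ≠ 0 := ha.ne'
    have hpne : p ≠ 0 := hp.ne'
    clear_value B
    field_simp
    linear_combination (4*B*X*Y) * hcrit
  exact (hD ▸ h6).congr_of_eventuallyEq hev
end

section
/- Let 0 < p < 4 and ω² = p/4 with ω ∈ (−1,1). Then lim_{λ→ω} ( S_λ(Φ_λ) − S_λ(Φ_ω) ) / (λ−ω)² = 0, where λ ranges over (−1,1)∖{ω}. -/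
open MeasureTheory Real Filter

/-- Momentum `Q(u,v) = ∫ u v`. -/
noncomputable def Qm (u v : ℝ → ℝ) : ℝ := ∫ x : ℝ, u x * v x

/-- Energy `E(u,v) = ½∫((∂ₓu)² + u² + v²) - (1/(p+2))∫|u|^{p+2}`. -/
noncomputable def En (p : ℝ) (u v : ℝ → ℝ) : ℝ :=
  (1 / 2) * (∫ x : ℝ, ((deriv u x) ^ 2 + (u x) ^ 2 + (v x) ^ 2))
    - (1 / (p + 2)) * ∫ x : ℝ, |u x| ^ (p + 2)

/-- Action `S_ω = E + ω Q`. -/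
noncomputable def Sfun (p ω : ℝ) (u v : ℝ → ℝ) : ℝ := En p u v + ω * Qm u v

lemma integrable_exp_neg_abs {r : ℝ} (hr : 0 < r) :
    Integrable (fun x : ℝ => Real.exp (-(r * |x|))) := by
  have h1 : IntegrableOn (fun x : ℝ => Real.exp (-(r * |x|))) (Set.Ioi 0) := by
    apply (exp_neg_integrableOn_Ioi 0 hr).congr_fun ?_ measurableSet_Ioi
    intro x hx; simp [abs_of_pos (Set.mem_Ioi.mp hx)]
  have h1' : IntegrableOn (fun x : ℝ => Real.exp (-(r * |x|))) (Set.Ici 0) :=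
    Iff.mpr integrableOn_Ici_iff_integrableOn_Ioi h1
  have h2 : IntegrableOn (fun x : ℝ => Real.exp (-(r * |x|))) (Set.Iic 0) := by
    have hmap : Measure.map Neg.neg (volume.restrict (Set.Ici (0:ℝ)))
        = volume.restrict (Set.Iic (0:ℝ)) := by
      have : Set.Ici (0:ℝ) = Neg.neg ⁻¹' (Set.Iic (0:ℝ)) := by ext x; simp
      rw [this, ← Measure.restrict_map measurable_neg measurableSet_Iic, Measure.map_neg_eq_self]
    rw [IntegrableOn, ← hmap, measurableEmbedding_neg.integrable_map_iff]
    exact h1'.congr_fun (fun x _ => by simp [Function.comp]) measurableSet_Ici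
  have := h2.union h1
  rwa [Set.Iic_union_Ioi, integrableOn_univ] at this

lemma continuous_sech_rpow (r : ℝ) : Continuous (fun x : ℝ => Real.cosh x ^ (-r)) :=
  Real.continuous_cosh.rpow_const (fun x => Or.inl (Real.cosh_pos x).ne')

lemma cosh_ge_exp_abs (x : ℝ) : Real.exp |x| / 2 ≤ Real.cosh x := by
  rw [Real.cosh_eq]
  rcases abs_cases x with ⟨h, _⟩ | ⟨h, _⟩ <;> rw [h] <;> have := (Real.exp_pos x).le <;>
    have := (Real.exp_pos (-x)).le <;> nlinarith

lemma sech_rpow_le {r : ℝ} (hr : 0 < r) (x : ℝ) :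
    Real.cosh x ^ (-r) ≤ (2:ℝ) ^ r * Real.exp (-(r * |x|)) := by
  have h1 : Real.cosh x ^ (-r) ≤ (Real.exp |x| / 2) ^ (-r) :=
    Real.rpow_le_rpow_of_nonpos (by positivity) (cosh_ge_exp_abs x) (by linarith)
  calc Real.cosh x ^ (-r) ≤ (Real.exp |x| / 2) ^ (-r) := h1
    _ = (2:ℝ) ^ r * Real.exp (-(r * |x|)) := by
      rw [Real.div_rpow (Real.exp_pos _).le (by norm_num), ← Real.exp_mul,
        Real.rpow_neg (by norm_num : (0:ℝ) ≤ 2), div_inv_eq_mul, mul_comm]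
      congr 1
      ring

lemma integrable_sech {r : ℝ} (hr : 0 < r) :
    Integrable (fun x : ℝ => Real.cosh x ^ (-r)) := by
  have hbd : ∀ x : ℝ, ‖Real.cosh x ^ (-r)‖ ≤ (2:ℝ) ^ r * Real.exp (-(r * |x|)) := by
    intro x
    rw [Real.norm_eq_abs, abs_of_nonneg (Real.rpow_nonneg (Real.cosh_pos x).le _)]
    exact sech_rpow_le hr x
  exact ((integrable_exp_neg_abs hr).const_mul _).mono
    (continuous_sech_rpow r).aestronglyMeasurable
    (Filter.Eventually.of_forall (fun x => (hbd x).trans (le_abs_self _)))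

lemma tendsto_aux {r : ℝ} (hr : 0 < r) :
    Tendsto (fun x : ℝ => (2:ℝ) ^ r * Real.exp (-(r * |x|))) atTop (nhds 0) ∧
    Tendsto (fun x : ℝ => (2:ℝ) ^ r * Real.exp (-(r * |x|))) atBot (nhds 0) := by
  constructor <;>
  · rw [show (0:ℝ) = (2:ℝ)^r * 0 by ring]
    apply Tendsto.const_mul
    apply Real.tendsto_exp_atBot.comp
    apply tendsto_neg_atTop_atBot.comp
    apply (tendsto_const_mul_atTop_of_pos hr).mpr
    first
      | exact tendsto_abs_atTop_atTop
      | exact tendsto_abs_atBot_atTop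

lemma hasDerivAt_g {m : ℝ} (x : ℝ) :
    HasDerivAt (fun x => Real.sinh x * Real.cosh x ^ (-(m+1)))
      (-m * Real.cosh x ^ (-m) + (m+1) * Real.cosh x ^ (-(m+2))) x := by
  have h1 : HasDerivAt (fun x => Real.cosh x ^ (-(m+1)))
      (Real.sinh x * (-(m+1)) * Real.cosh x ^ (-(m+1) - 1)) x :=
    (Real.hasDerivAt_cosh x).rpow_const (Or.inl (Real.cosh_pos x).ne')
  have h2 := (Real.hasDerivAt_sinh x).mul h1
  refine h2.congr_deriv ?_
  have hc := Real.cosh_pos x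
  have e1 : Real.cosh x * Real.cosh x ^ (-(m+1)) = Real.cosh x ^ (-m) := by
    nth_rewrite 1 [← Real.rpow_one (Real.cosh x)]
    rw [← Real.rpow_add hc]; norm_num
  have e2 : Real.sinh x ^ 2 * Real.cosh x ^ (-(m+1) - 1)
      = Real.cosh x ^ (-m) - Real.cosh x ^ (-(m+2)) := by
    rw [show Real.sinh x ^ 2 = Real.cosh x ^ 2 - 1 by
      have := Real.cosh_sq' x; linarith]
    rw [sub_mul, one_mul, ← Real.rpow_natCast (Real.cosh x) 2,
      ← Real.rpow_add hc]
    rw [show ((2:ℕ):ℝ) + (-(m+1)-1) = -m by push_cast; ring,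
      show -(m+1)-1 = -(m+2) by ring]
  rw [e1, show sinh x * (sinh x * -(m + 1) * Real.cosh x ^ (-(m + 1) - 1))
      = -(m+1) * (Real.sinh x ^ 2 * Real.cosh x ^ (-(m+1)-1)) by ring, e2]
  ring

lemma abs_sinh_le_cosh (x : ℝ) : |Real.sinh x| ≤ Real.cosh x := by
  rw [abs_le]
  constructor
  · have := Real.sinh_lt_cosh (x := -x); rw [Real.sinh_neg, Real.cosh_neg] at this; linarith
  · exact (Real.sinh_lt_cosh x).le

lemma sech_reduction {m : ℝ} (hm : 0 < m) :
    ∫ x : ℝ, Real.cosh x ^ (-(m+2)) = (m/(m+1)) * ∫ x : ℝ, Real.cosh x ^ (-m) := by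
  have hi1 := integrable_sech hm
  have hi2 : Integrable (fun x : ℝ => Real.cosh x ^ (-(m+2))) := integrable_sech (by linarith)
  have hint : Integrable (fun x : ℝ =>
      -m * Real.cosh x ^ (-m) + (m+1) * Real.cosh x ^ (-(m+2))) :=
    (hi1.const_mul _).add (hi2.const_mul _)
  have hbound : ∀ x : ℝ, ‖Real.sinh x * Real.cosh x ^ (-(m+1))‖
      ≤ (2:ℝ) ^ m * Real.exp (-(m * |x|)) := by
    intro x
    rw [norm_mul, Real.norm_eq_abs, Real.norm_eq_abs,
      abs_of_nonneg (Real.rpow_nonneg (Real.cosh_pos x).le _)]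
    calc |Real.sinh x| * Real.cosh x ^ (-(m+1))
        ≤ Real.cosh x * Real.cosh x ^ (-(m+1)) := by
          apply mul_le_mul_of_nonneg_right (abs_sinh_le_cosh x)
            (Real.rpow_nonneg (Real.cosh_pos x).le _)
      _ = Real.cosh x ^ (-m) := by
          nth_rewrite 1 [← Real.rpow_one (Real.cosh x)]
          rw [← Real.rpow_add (Real.cosh_pos x)]; norm_num
      _ ≤ (2:ℝ) ^ m * Real.exp (-(m * |x|)) := sech_rpow_le hm x
  have htop : Tendsto (fun x => Real.sinh x * Real.cosh x ^ (-(m+1))) atTop (nhds 0) :=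
    squeeze_zero_norm hbound (tendsto_aux hm).1
  have hbot : Tendsto (fun x => Real.sinh x * Real.cosh x ^ (-(m+1))) atBot (nhds 0) :=
    squeeze_zero_norm hbound (tendsto_aux hm).2
  have key := integral_of_hasDerivAt_of_tendsto (fun x => hasDerivAt_g (m := m) x) hint hbot htop
  rw [sub_zero] at key
  rw [integral_add (hi1.const_mul _) (hi2.const_mul _), integral_const_mul, integral_const_mul]
    at key
  have hm1 : m + 1 ≠ 0 := by positivity
  rw [div_mul_eq_mul_div, eq_div_iff hm1]
  linarith [key]

lemma hasDerivAt_phi (p l : ℝ) (x : ℝ) :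
    HasDerivAt (phi p l)
      (((p + 2) * (1 - l ^ 2) / 2) ^ (1 / p) *
        (Real.sinh (p / 2 * Real.sqrt (1 - l ^ 2) * x) * (p / 2 * Real.sqrt (1 - l ^ 2))
          * (-(2 / p)) * Real.cosh (p / 2 * Real.sqrt (1 - l ^ 2) * x) ^ (-(2 / p) - 1))) x := by
  set b := p / 2 * Real.sqrt (1 - l ^ 2)
  have h1 : HasDerivAt (fun x : ℝ => b * x) b x := by simpa using (hasDerivAt_id x).const_mul b
  have h2 : HasDerivAt (fun x : ℝ => Real.cosh (b * x)) (Real.sinh (b * x) * b) x :=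
    (Real.hasDerivAt_cosh (b * x)).comp x h1
  have h3 := h2.rpow_const (p := -(2/p)) (Or.inl (Real.cosh_pos (b * x)).ne')
  have h4 := h3.const_mul (((p + 2) * (1 - l ^ 2) / 2) ^ (1 / p))
  refine h4.congr_deriv ?_
  try ring

lemma integral_sech_scaled {b : ℝ} (hb : 0 < b) (r : ℝ) :
    ∫ x : ℝ, Real.cosh (b * x) ^ (-r) = b⁻¹ * ∫ x : ℝ, Real.cosh x ^ (-r) := by
  rw [MeasureTheory.Measure.integral_comp_mul_left (fun y => Real.cosh y ^ (-r)) b,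
    abs_of_pos (inv_pos.mpr hb), smul_eq_mul]

noncomputable def Jp (p : ℝ) : ℝ := ∫ x : ℝ, Real.cosh x ^ (-(4/p))
noncomputable def Cc (p : ℝ) : ℝ := ((p+2)/2) ^ ((2:ℝ)/p) * (2/(p+4)) * Jp p
noncomputable def al (p : ℝ) : ℝ := 2/p + 1/2

lemma Asq_binv (p l : ℝ) (hp : 0 < p) (hl2 : l ^ 2 < 1) :
    (((p + 2) * (1 - l^2) / 2) ^ (1 / p)) ^ 2 * (p / 2 * Real.sqrt (1 - l^2))⁻¹
      = ((p+2)/2) ^ ((2:ℝ)/p) * (p/2)⁻¹ * (1 - l^2) ^ (al p - 1) := by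
  have hc : 0 < 1 - l^2 := by nlinarith
  have hX : (0:ℝ) < (p + 2) * (1 - l^2) / 2 := by positivity
  have hA2 : (((p + 2) * (1 - l^2) / 2) ^ (1 / p)) ^ 2
      = ((p+2)/2) ^ ((2:ℝ)/p) * (1 - l^2) ^ ((2:ℝ)/p) := by
    rw [sq, ← Real.rpow_add hX, show (1/p + 1/p) = (2:ℝ)/p by ring,
      show (p + 2) * (1 - l^2) / 2 = ((p+2)/2) * (1 - l^2) by ring,
      Real.mul_rpow (by positivity) hc.le]
  have hbinv : (p / 2 * Real.sqrt (1 - l^2))⁻¹ = (p/2)⁻¹ * (1 - l^2) ^ (-(1:ℝ)/2) := by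
    rw [mul_inv, Real.sqrt_eq_rpow, ← Real.rpow_neg hc.le]
    norm_num
  rw [hA2, hbinv, mul_mul_mul_comm, ← Real.rpow_add hc]
  congr 1
  unfold al; ring

lemma qm_eq (p l : ℝ) (hp : 0 < p) (hl2 : l ^ 2 < 1) :
    Qm (phi p l) (fun x => -l * phi p l x)
      = -(2 * Cc p * al p) * l * (1 - l^2) ^ (al p - 1) := by
  have hc : 0 < 1 - l^2 := by nlinarith
  have hs : 0 < Real.sqrt (1 - l^2) := Real.sqrt_pos.mpr hc
  have hb : 0 < p / 2 * Real.sqrt (1 - l^2) := by positivity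
  set b := p / 2 * Real.sqrt (1 - l^2) with hbdef
  set A := ((p + 2) * (1 - l^2) / 2) ^ (1 / p) with hAdef
  have hpt : ∀ x : ℝ, phi p l x * (-l * phi p l x)
      = (-l * A^2) * Real.cosh (b * x) ^ (-(4/p)) := by
    intro x
    have hch : 0 < Real.cosh (b * x) := Real.cosh_pos _
    show (A * Real.cosh (b*x) ^ (-(2/p))) * (-l * (A * Real.cosh (b*x) ^ (-(2/p)))) = _
    rw [show (A * Real.cosh (b*x) ^ (-(2/p))) * (-l * (A * Real.cosh (b*x) ^ (-(2/p))))
      = (-l * A^2) * (Real.cosh (b*x) ^ (-(2/p)) * Real.cosh (b*x) ^ (-(2/p))) by ring,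
      ← Real.rpow_add hch]
    congr 1
    ring
  rw [Qm]
  simp only [hpt]
  rw [integral_const_mul, integral_sech_scaled hb]
  rw [show (-l * A^2) * (b⁻¹ * ∫ x : ℝ, Real.cosh x ^ (-(4/p)))
    = (A^2 * b⁻¹) * (-l * Jp p) by rw [Jp]; ring]
  rw [hbdef, hAdef, Asq_binv p l hp hl2]
  rw [Cc, al]
  have h4 : p + 4 ≠ 0 := by positivity
  field_simp
  ring

lemma sfun_eq (p l : ℝ) (hp : 0 < p) (hl2 : l ^ 2 < 1) :
    Sfun p l (phi p l) (fun x => -l * phi p l x) = Cc p * (1 - l^2) ^ al p := by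
  have hc : 0 < 1 - l^2 := by nlinarith
  have hs : 0 < Real.sqrt (1 - l^2) := Real.sqrt_pos.mpr hc
  have hb : 0 < p / 2 * Real.sqrt (1 - l^2) := by positivity
  have hX : (0:ℝ) < (p + 2) * (1 - l^2) / 2 := by positivity
  have hm : 0 < 4/p := by positivity
  have hm2 : 0 < 4/p + 2 := by positivity
  set b := p / 2 * Real.sqrt (1 - l^2) with hbdef
  set A := ((p + 2) * (1 - l^2) / 2) ^ (1 / p) with hAdef
  have hA : 0 < A := Real.rpow_pos_of_pos hX _
  have hb2 : b^2 = p^2/4 * (1 - l^2) := by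
    rw [hbdef, mul_pow, Real.sq_sqrt hc.le]; ring
  -- pointwise identities
  have hder : ∀ x : ℝ, (deriv (phi p l) x)^2
      = A^2 * (1 - l^2) * (Real.cosh (b*x) ^ (-(4/p)) - Real.cosh (b*x) ^ (-(4/p+2))) := by
    intro x
    rw [(hasDerivAt_phi p l x).deriv]
    have hch : 0 < Real.cosh (b * x) := Real.cosh_pos _
    rw [show (A * (Real.sinh (b*x) * b * (-(2/p)) * Real.cosh (b*x) ^ (-(2/p) - 1)))^2
      = A^2 * b^2 * (4/p^2) * (Real.sinh (b*x)^2
          * (Real.cosh (b*x) ^ (-(2/p) - 1) * Real.cosh (b*x) ^ (-(2/p) - 1))) by ring,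
      ← Real.rpow_add hch]
    rw [show Real.sinh (b*x)^2 = Real.cosh (b*x)^2 - 1 by
      have := Real.cosh_sq' (b*x); linarith]
    rw [sub_mul, one_mul, ← Real.rpow_natCast (Real.cosh (b*x)) 2, ← Real.rpow_add hch,
      show ((2:ℕ):ℝ) + (-(2/p) - 1 + (-(2/p) - 1)) = -(4/p) by push_cast; field_simp; ring,
      show (-(2/p) - 1 + (-(2/p) - 1)) = -(4/p+2) by field_simp; ring,
      hb2]
    field_simp
  have hsq : ∀ x : ℝ, (phi p l x)^2 = A^2 * Real.cosh (b*x) ^ (-(4/p)) := by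
    intro x
    have hch : 0 < Real.cosh (b * x) := Real.cosh_pos _
    show (A * Real.cosh (b*x) ^ (-(2/p)))^2 = _
    rw [mul_pow, sq (Real.cosh (b*x) ^ (-(2/p))), ← Real.rpow_add hch]
    congr 1
    ring
  have habs : ∀ x : ℝ, |phi p l x| ^ (p+2)
      = A^2 * ((p+2) * (1 - l^2) / 2) * Real.cosh (b*x) ^ (-(4/p+2)) := by
    intro x
    have hch : 0 < Real.cosh (b * x) := Real.cosh_pos _
    have hphipos : 0 < phi p l x := by
      show 0 < A * Real.cosh (b*x) ^ (-(2/p))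
      positivity
    rw [abs_of_pos hphipos]
    show (A * Real.cosh (b*x) ^ (-(2/p))) ^ (p+2) = _
    have hAp : A ^ (p:ℝ) = (p + 2) * (1 - l^2) / 2 := by
      rw [hAdef, ← Real.rpow_mul hX.le, one_div, inv_mul_cancel₀ hp.ne', Real.rpow_one]
    rw [Real.mul_rpow hA.le (Real.rpow_nonneg hch.le _), ← Real.rpow_mul hch.le,
      show (-(2/p)) * (p+2) = -(4/p+2) by field_simp; ring,
      Real.rpow_add hA p 2, hAp, Real.rpow_two]
    ring
  -- integrability
  have hiJ : Integrable (fun x : ℝ => Real.cosh (b*x) ^ (-(4/p))) :=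
    (integrable_sech hm).comp_mul_left' hb.ne'
  have hiJ2 : Integrable (fun x : ℝ => Real.cosh (b*x) ^ (-(4/p+2))) :=
    (integrable_sech hm2).comp_mul_left' hb.ne'
  -- the three-term integral
  have hfun : (fun x : ℝ => (deriv (phi p l) x)^2 + (phi p l x)^2 + (-l * phi p l x)^2)
      = fun x : ℝ => 2*A^2 * Real.cosh (b*x) ^ (-(4/p))
        - A^2*(1-l^2) * Real.cosh (b*x) ^ (-(4/p+2)) := by
    funext x
    rw [hder x, show (-l * phi p l x)^2 = l^2 * (phi p l x)^2 by ring, hsq x]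
    ring
  have hint1 : (∫ x : ℝ, ((deriv (phi p l) x)^2 + (phi p l x)^2 + (-l * phi p l x)^2))
      = 2*A^2 * (b⁻¹ * Jp p) - A^2*(1-l^2) * (b⁻¹ * ∫ x : ℝ, Real.cosh x ^ (-(4/p+2))) := by
    rw [hfun, integral_sub (hiJ.const_mul _) (hiJ2.const_mul _), integral_const_mul,
      integral_const_mul, integral_sech_scaled hb, integral_sech_scaled hb, Jp]
  have hint2 : (∫ x : ℝ, |phi p l x| ^ (p+2))
      = A^2 * ((p+2) * (1 - l^2) / 2) * (b⁻¹ * ∫ x : ℝ, Real.cosh x ^ (-(4/p+2))) := by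
    rw [show (fun x : ℝ => |phi p l x| ^ (p+2)) = fun x : ℝ =>
        A^2 * ((p+2) * (1 - l^2) / 2) * Real.cosh (b*x) ^ (-(4/p+2)) from funext habs,
      integral_const_mul, integral_sech_scaled hb]
  have hqm : Qm (phi p l) (fun x => -l * phi p l x) = (-l*A^2) * (b⁻¹ * Jp p) := by
    have hpt : ∀ x : ℝ, phi p l x * (-l * phi p l x)
        = (-l * A^2) * Real.cosh (b * x) ^ (-(4/p)) := by
      intro x
      rw [show phi p l x * (-l * phi p l x) = -l * (phi p l x)^2 by ring, hsq x]
      ring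
    rw [Qm]
    simp only [hpt]
    rw [integral_const_mul, integral_sech_scaled hb, Jp]
  have h4 : p + 4 ≠ 0 := by positivity
  have hstep : Sfun p l (phi p l) (fun x => -l * phi p l x)
      = (A^2 * b⁻¹) * ((1-l^2) * (p/(p+4)) * Jp p) := by
    rw [Sfun, En, hqm]
    rw [hint1, hint2, sech_reduction hm,
      show (∫ x : ℝ, Real.cosh x ^ (-(4/p))) = Jp p from rfl,
      show (4:ℝ)/p/(4/p+1) = 4/(4+p) by
        rw [div_div]
        congr 1
        field_simp]
    have h4' : (4:ℝ) + p ≠ 0 := by positivity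
    field_simp
    ring
  rw [hstep, hAdef, hbdef, Asq_binv p l hp hl2,
    show ((p+2)/2) ^ ((2:ℝ)/p) * (p/2)⁻¹ * (1 - l^2) ^ (al p - 1)
        * ((1-l^2) * (p/(p+4)) * Jp p)
      = ((p+2)/2) ^ ((2:ℝ)/p) * (p/2)⁻¹ * (p/(p+4)) * Jp p
        * ((1 - l^2) ^ (al p - 1) * (1-l^2)) by ring,
    show (1 - l^2) ^ (al p - 1) * (1-l^2) = (1-l^2) ^ (al p) by
      nth_rewrite 2 [← Real.rpow_one (1-l^2)]
      rw [← Real.rpow_add hc]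
      congr 1
      ring,
    Cc]
  field_simp

/-- At the critical frequency `ω² = p/4`,
`S_λ(Φ_λ) - S_λ(Φ_ω) = o((λ-ω)²)` as `λ → ω` within `(-1,1) \ {ω}`. -/
theorem S_difference_little_o (p ω : ℝ) (hp : 0 < p) (hp4 : p < 4)
    (hω1 : -1 < ω) (hω2 : ω < 1) (hcrit : ω ^ 2 = p / 4) :
    Filter.Tendsto
      (fun l : ℝ =>
        (Sfun p l (phi p l) (fun x => -l * phi p l x)
          - Sfun p l (phi p ω) (fun x => -ω * phi p ω x)) / (l - ω) ^ 2)
      (nhdsWithin ω (Set.Ioo (-1) 1 \ {ω})) (nhds 0) := by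
  have hl2ω : ω ^ 2 < 1 := by nlinarith
  have hc₀ : 0 < 1 - ω ^ 2 := by nlinarith
  set f : ℝ → ℝ := fun l => Cc p * (1 - l^2) ^ al p with hfdef
  set h : ℝ → ℝ := fun l => -(2 * Cc p * al p) * l * (1 - l^2) ^ (al p - 1) with hhdef
  set N : ℝ → ℝ := fun l => f l - f ω - (l - ω) * h ω with hNdef
  -- derivative of f
  have hf : ∀ l : ℝ, l^2 < 1 → HasDerivAt f (h l) l := by
    intro l hl2
    have hcl : 0 < 1 - l^2 := by nlinarith
    have h1 : HasDerivAt (fun x : ℝ => 1 - x^2) (-(2*l^1)) l :=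
      (hasDerivAt_pow 2 l).const_sub 1
    have h2 := h1.rpow_const (p := al p) (Or.inl hcl.ne')
    have h3 := h2.const_mul (Cc p)
    refine h3.congr_deriv ?_
    simp only [hhdef]
    ring
  -- second derivative vanishes at ω
  have hh : HasDerivAt h 0 ω := by
    have h1 : HasDerivAt (fun x : ℝ => 1 - x^2) (-(2*ω^1)) ω :=
      (hasDerivAt_pow 2 ω).const_sub 1
    have h2 := h1.rpow_const (p := al p - 1) (Or.inl hc₀.ne')
    have h3 := (hasDerivAt_id ω).mul h2
    have h4 := h3.const_mul (-(2 * Cc p * al p))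
    have e : (1 - ω^2) ^ (al p - 1) = (1 - ω^2) ^ (al p - 1 - 1) * (1 - ω^2) := by
      conv_lhs => rw [show al p - 1 = (al p - 1 - 1) + 1 by ring]
      rw [Real.rpow_add hc₀, Real.rpow_one]
    have key : 1 - ω^2 = 2 * (al p - 1) * ω^2 := by
      rw [hcrit, al]
      field_simp
      ring
    convert h4 using 1
    · rfl
    · rfl
    · funext l
      simp only [hhdef, id_eq, Pi.mul_apply]
      ring
    · simp only [id_eq]
      linear_combination (2 * Cc p * al p) * e
        + (2 * Cc p * al p) * (1 - ω^2) ^ (al p - 1 - 1) * key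
  -- eventual facts
  have hev : ∀ᶠ l in nhds ω, l ∈ Set.Ioo (-1:ℝ) 1 :=
    isOpen_Ioo.eventually_mem (Set.mem_Ioo.mpr ⟨hω1, hω2⟩)
  have hNderiv : ∀ᶠ l in nhdsWithin ω {ω}ᶜ, HasDerivAt N (h l - h ω) l := by
    apply eventually_nhdsWithin_of_eventually_nhds
    filter_upwards [hev] with l hl
    have hl2 : l^2 < 1 := by
      rcases Set.mem_Ioo.mp hl with ⟨a, b⟩; nlinarith
    have := ((hf l hl2).sub_const (f ω)).sub
      (((hasDerivAt_id l).sub_const ω).mul_const (h ω))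
    simp at this ⊢; exact this
  have hDderiv : ∀ l : ℝ, HasDerivAt (fun l : ℝ => (l - ω)^2) (2*(l - ω)) l := by
    intro l
    have := ((hasDerivAt_id l).sub_const ω).pow 2
    simp [mul_comm] at this ⊢; exact this
  have hg' : ∀ᶠ l in nhdsWithin ω {ω}ᶜ, 2*(l - ω) ≠ 0 := by
    filter_upwards [self_mem_nhdsWithin] with l hl
    simp only [Set.mem_compl_iff, Set.mem_singleton_iff] at hl
    intro hcon
    apply hl
    have : l - ω = 0 := by linarith
    linarith
  have hfa : Tendsto N (nhdsWithin ω {ω}ᶜ) (nhds 0) := by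
    have hcont : ContinuousAt N ω := by
      have hNd : HasDerivAt N (h ω - h ω) ω := by
        have := ((hf ω hl2ω).sub_const (f ω)).sub
          (((hasDerivAt_id ω).sub_const ω).mul_const (h ω))
        simp at this ⊢; exact this
      exact hNd.continuousAt
    have : N ω = 0 := by simp [hNdef]
    rw [← this]
    exact hcont.continuousWithinAt.tendsto
  have hga : Tendsto (fun l : ℝ => (l - ω)^2) (nhdsWithin ω {ω}ᶜ) (nhds 0) := by
    have : ContinuousAt (fun l : ℝ => (l - ω)^2) ω := by fun_prop
    have h0 : ((ω:ℝ) - ω)^2 = 0 := by ring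
    have := this.continuousWithinAt.tendsto (s := {ω}ᶜ)
    rwa [h0] at this
  have hdiv : Tendsto (fun l => (h l - h ω) / (2*(l - ω))) (nhdsWithin ω {ω}ᶜ) (nhds 0) := by
    have hslope := hasDerivAt_iff_tendsto_slope.mp hh
    have h2 := hslope.div_const 2
    rw [zero_div] at h2
    apply h2.congr
    intro l
    rw [slope_def_field, div_div, mul_comm]
  have hmain : Tendsto (fun l => N l / (l - ω)^2) (nhdsWithin ω {ω}ᶜ) (nhds 0) :=
    HasDerivAt.lhopital_zero_nhdsNE hNderiv
      (Filter.Eventually.of_forall (fun l => hDderiv l)) hg' hfa hga hdiv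
  -- transfer to the actual expression
  have hsub : Set.Ioo (-1:ℝ) 1 \ {ω} ⊆ {ω}ᶜ := fun l hl => hl.2
  have hmain2 : Tendsto (fun l => N l / (l - ω)^2)
      (nhdsWithin ω (Set.Ioo (-1) 1 \ {ω})) (nhds 0) :=
    hmain.mono_left (nhdsWithin_mono ω hsub)
  apply hmain2.congr'
  filter_upwards [self_mem_nhdsWithin] with l hl
  rcases hl with ⟨hlmem, hlne⟩
  have hl2 : l^2 < 1 := by
    rcases Set.mem_Ioo.mp hlmem with ⟨a, b⟩; nlinarith
  have e1 : Sfun p l (phi p l) (fun x => -l * phi p l x) = f l := sfun_eq p l hp hl2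
  have e2 : Sfun p l (phi p ω) (fun x => -ω * phi p ω x)
      = f ω + (l - ω) * h ω := by
    have base : Sfun p ω (phi p ω) (fun x => -ω * phi p ω x) = f ω := sfun_eq p ω hp hl2ω
    have hq : Qm (phi p ω) (fun x => -ω * phi p ω x) = h ω := qm_eq p ω hp hl2ω
    have expand : ∀ t : ℝ, Sfun p t (phi p ω) (fun x => -ω * phi p ω x)
        = En p (phi p ω) (fun x => -ω * phi p ω x)
          + t * Qm (phi p ω) (fun x => -ω * phi p ω x) := fun t => rfl
    rw [expand l, hq]
    rw [expand ω, hq] at base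
    linarith [base]
  rw [hNdef]
  simp only
  rw [e1, e2]
  ring_nf
end

section
/- Let p > 0 and ω ∈ (−1,1). Suppose λ₋₁ < 0 and ζ : ℝ → ℝ is a twice differentiable function, not identically zero, satisfying −ζ''(x) + (1−ω²)ζ(x) − (p+1)φ_ω(x)^p ζ(x) = λ₋₁·ζ(x) for all x. Define μ₀ = (1/2)·( λ₋₁ + ω² + 1 − √( λ₋₁² + 2(ω²−1)λ₋₁ + (ω²+1)² ) ). Then μ₀ < 0, μ₀·( ω²/(1−μ₀) + 1 ) = λ₋₁, and the pair (ξ, g) = ( ζ, ω·ζ/(μ₀−1) ) satisfies the eigenvector equations −ξ'' + ξ − (p+1)φ_ω^p ξ + ω·g = μ₀·ξ and g + ω·ξ = μ₀·g on ℝ; that is, S_ω''(Φ_ω)(ξ,g) = μ₀·(ξ,g). -/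
open MeasureTheory Real Filter

/-- From the negative eigenvalue `λ₋₁` of the scalar operator
`-∂ₓ² + (1-ω²) - (p+1)φ_ω^p` with eigenvector `ζ`, one obtains a negative
eigenvalue `μ₀` of the Hessian `S_ω''(Φ_ω)` with eigenvector
`(ζ, ωζ/(μ₀-1))`. -/
theorem negative_eigenvalue_of_hessian (p ω : ℝ) (hp : 0 < p)
    (hω1 : -1 < ω) (hω2 : ω < 1) (lam μ₀ : ℝ) (hlam : lam < 0)
    (ζ : ℝ → ℝ) (hζ1 : Differentiable ℝ ζ) (hζ2 : Differentiable ℝ (deriv ζ))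
    (hζ0 : ζ ≠ 0)
    (heig : ∀ x : ℝ,
      -(deriv (deriv ζ) x) + (1 - ω ^ 2) * ζ x - (p + 1) * (phi p ω x) ^ p * ζ x
        = lam * ζ x)
    (hμ : μ₀ = (1 / 2) * (lam + ω ^ 2 + 1 -
      Real.sqrt (lam ^ 2 + 2 * (ω ^ 2 - 1) * lam + (ω ^ 2 + 1) ^ 2))) :
    μ₀ < 0 ∧ μ₀ * (ω ^ 2 / (1 - μ₀) + 1) = lam ∧
    (∀ x : ℝ,
      -(deriv (deriv ζ) x) + ζ x - (p + 1) * (phi p ω x) ^ p * ζ x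
        + ω * (ω * ζ x / (μ₀ - 1)) = μ₀ * ζ x) ∧
    (∀ x : ℝ, ω * ζ x / (μ₀ - 1) + ω * ζ x = μ₀ * (ω * ζ x / (μ₀ - 1))) := by
  set D : ℝ := lam ^ 2 + 2 * (ω ^ 2 - 1) * lam + (ω ^ 2 + 1) ^ 2 with hD
  have hDeq : D = (lam + ω ^ 2 + 1) ^ 2 - 4 * lam := by ring
  have hDpos : 0 < D := by nlinarith [sq_nonneg (lam + ω ^ 2 + 1)]
  have hs0 : 0 ≤ Real.sqrt D := Real.sqrt_nonneg D
  have hs : Real.sqrt D ^ 2 = D := Real.sq_sqrt hDpos.le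
  -- μ₀ < 0
  have hμneg : μ₀ < 0 := by
    rw [hμ]
    have h1 : lam + ω ^ 2 + 1 < Real.sqrt D := by
      nlinarith [sq_nonneg (lam + ω ^ 2 + 1 - Real.sqrt D)]
    linarith
  have h1μ : (0:ℝ) < 1 - μ₀ := by linarith
  have h1μ' : μ₀ - 1 ≠ 0 := by intro h; nlinarith
  -- quadratic identity
  have hquad : μ₀ ^ 2 - (lam + ω ^ 2 + 1) * μ₀ + lam = 0 := by
    rw [hμ]; nlinarith [hs]
  have hkey : μ₀ * (ω ^ 2 / (1 - μ₀) + 1) = lam := by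
    field_simp
    nlinarith [hquad]
  refine ⟨hμneg, hkey, ?_, ?_⟩
  · intro x
    have h := heig x
    have hω2' : ω ^ 2 / (μ₀ - 1) = μ₀ - lam - ω ^ 2 := by
      field_simp
      nlinarith [hquad]
    have : ω * (ω * ζ x / (μ₀ - 1)) = (μ₀ - lam - ω ^ 2) * ζ x := by
      rw [← hω2']; field_simp
    rw [this]; linarith
  · intro x
    field_simp
    ring
end

section
/- Let p > 0 and ω ∈ (−1,1). For each x ∈ ℝ the map λ ↦ φ_λ(x) (λ ∈ (−1,1)) is differentiable, and its derivative ∂_ωφ_ω(x) at λ = ω satisfies the differential equation −∂_x²(∂_ωφ_ω)(x) + (1−ω²)·∂_ωφ_ω(x) − (p+1)·φ_ω(x)^p·∂_ωφ_ω(x) = 2ω·φ_ω(x) for all x ∈ ℝ. Consequently, for ω ≠ 0, the pair ψ_ω = (1/(2ω))·(∂_ωφ_ω, −ω·∂_ωφ_ω) satisfies S_ω''(Φ_ω)ψ_ω = (φ_ω, 0). -/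
open MeasureTheory Real Filter

/-- `∂_ωφ_ω(x)` : derivative of `λ ↦ φ_λ(x)` at `λ = ω`. -/
noncomputable def dphi (p ω : ℝ) (x : ℝ) : ℝ := deriv (fun m : ℝ => phi p m x) ω

namespace DerivFreqAux

noncomputable def kk (ω : ℝ) : ℝ := Real.sqrt (1 - ω ^ 2)
noncomputable def cc (p ω : ℝ) : ℝ := p / 2 * kk ω
noncomputable def AA (p ω : ℝ) : ℝ := (p + 2) * (1 - ω ^ 2) / 2
noncomputable def Ch (p ω y : ℝ) : ℝ := Real.cosh (cc p ω * y)
noncomputable def Sh (p ω y : ℝ) : ℝ := Real.sinh (cc p ω * y)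
noncomputable def P0 (p ω : ℝ) : ℝ → ℝ := fun y => Ch p ω y ^ (-(2/p))
noncomputable def P1 (p ω : ℝ) : ℝ → ℝ := fun y => Ch p ω y ^ (-(2/p) - 1)
noncomputable def P2 (p ω : ℝ) : ℝ → ℝ := fun y => Ch p ω y ^ (-(2/p) - 2)
noncomputable def P3 (p ω : ℝ) : ℝ → ℝ := fun y => Ch p ω y ^ (-(2/p) - 3)
noncomputable def aa (p ω : ℝ) : ℝ := -((p+2)*(2*ω)/2) * (1/p) * AA p ω ^ (1/p - 1)
noncomputable def bb (p ω : ℝ) : ℝ := AA p ω ^ (1/p) * ω / kk ω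

noncomputable def DD (p ω : ℝ) : ℝ → ℝ := fun y =>
  aa p ω * P0 p ω y + bb p ω * y * P1 p ω y * Sh p ω y

noncomputable def DD1 (p ω : ℝ) : ℝ → ℝ := fun y =>
  (bb p ω - aa p ω * (2/p) * cc p ω) * (P1 p ω y * Sh p ω y)
    + (bb p ω * cc p ω) *
      (y * ((-(2/p) - 1) * (P2 p ω y * (Sh p ω y * Sh p ω y)) + P1 p ω y * Ch p ω y))

noncomputable def DD2 (p ω : ℝ) : ℝ → ℝ := fun y =>
  (bb p ω - aa p ω * (2/p) * cc p ω) * cc p ω *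
      ((-(2/p) - 1) * (P2 p ω y * (Sh p ω y * Sh p ω y)) + P1 p ω y * Ch p ω y)
    + (bb p ω * cc p ω) *
      ( ((-(2/p) - 1) * (P2 p ω y * (Sh p ω y * Sh p ω y)) + P1 p ω y * Ch p ω y)
        + y * cc p ω *
          ( ((2/p) + 1) * ((2/p) + 2) * (P3 p ω y * (Sh p ω y * Sh p ω y) * Sh p ω y)
            - 3 * ((2/p) + 1) * (P2 p ω y * Sh p ω y * Ch p ω y)
            + P1 p ω y * Sh p ω y ) )

lemma phi_omega_hasDerivAt (p x l : ℝ) (hp : 0 < p) (h1 : -1 < l) (h2 : l < 1) :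
    HasDerivAt (fun m : ℝ => phi p m x)
      ((-((p+2)*(2*l)/2) * (1/p) * ((p+2)*(1-l^2)/2) ^ (1/p - 1)) *
          Real.cosh (p / 2 * Real.sqrt (1 - l ^ 2) * x) ^ (-(2/p))
        + ((p+2)*(1-l^2)/2) ^ (1/p) *
          ((Real.sinh (p / 2 * Real.sqrt (1 - l ^ 2) * x) *
              (p/2 * (-(2*l) / (2 * Real.sqrt (1 - l^2))) * x)) * (-(2/p)) *
            Real.cosh (p / 2 * Real.sqrt (1 - l ^ 2) * x) ^ (-(2/p) - 1))) l := by
  have hl2 : 0 < 1 - l^2 := by nlinarith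
  have hA : 0 < (p+2)*(1-l^2)/2 := by positivity
  have hin : HasDerivAt (fun m : ℝ => (p+2)*(1-m^2)/2) (-((p+2)*(2*l)/2)) l := by
    have h := (((hasDerivAt_pow 2 l).const_sub 1).const_mul ((p+2)/2))
    have e : (fun m : ℝ => (p+2)/2*(1-m^2)) = (fun m : ℝ => (p+2)*(1-m^2)/2) := by
      funext m; ring
    rw [e] at h
    exact h.congr_deriv (by push_cast; ring)
  have hF := hin.rpow_const (p := 1/p) (Or.inl hA.ne')
  have hin2 : HasDerivAt (fun m : ℝ => 1 - m^2) (-(2*l)) l := by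
    have h := ((hasDerivAt_pow 2 l).const_sub 1)
    exact h.congr_deriv (by push_cast; ring)
  have hsq := hin2.sqrt hl2.ne'
  have h3 := (hsq.const_mul (p/2)).mul_const x
  have hG := (h3.cosh).rpow_const (p := -(2/p)) (Or.inl (Real.cosh_pos _).ne')
  have h := hF.mul hG
  simp only [phi]
  exact h

lemma cc_hasDerivAt (p ω y : ℝ) :
    HasDerivAt (fun t : ℝ => cc p ω * t) (cc p ω) y := by
  simpa using (hasDerivAt_id y).const_mul (cc p ω)

lemma Ch_hasDerivAt (p ω y : ℝ) :
    HasDerivAt (Ch p ω) (Sh p ω y * cc p ω) y :=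
  (cc_hasDerivAt p ω y).cosh

lemma Sh_hasDerivAt (p ω y : ℝ) :
    HasDerivAt (Sh p ω) (Ch p ω y * cc p ω) y :=
  (cc_hasDerivAt p ω y).sinh

lemma coshpow_hasDerivAt (p ω r y : ℝ) :
    HasDerivAt (fun t : ℝ => Ch p ω t ^ r)
      ((Sh p ω y * cc p ω) * r * Ch p ω y ^ (r - 1)) y :=
  (Ch_hasDerivAt p ω y).rpow_const (Or.inl (Real.cosh_pos _).ne')

lemma P0_hasDerivAt (p ω y : ℝ) :
    HasDerivAt (P0 p ω) ((Sh p ω y * cc p ω) * (-(2/p)) * P1 p ω y) y := by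
  have h := coshpow_hasDerivAt p ω (-(2/p)) y
  exact h

lemma P1_hasDerivAt (p ω y : ℝ) :
    HasDerivAt (P1 p ω) ((Sh p ω y * cc p ω) * (-(2/p) - 1) * P2 p ω y) y := by
  have h := coshpow_hasDerivAt p ω (-(2/p) - 1) y
  rw [show -(2/p) - 1 - 1 = -(2/p) - 2 by ring] at h
  exact h

lemma P2_hasDerivAt (p ω y : ℝ) :
    HasDerivAt (P2 p ω) ((Sh p ω y * cc p ω) * (-(2/p) - 2) * P3 p ω y) y := by
  have h := coshpow_hasDerivAt p ω (-(2/p) - 2) y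
  rw [show -(2/p) - 2 - 1 = -(2/p) - 3 by ring] at h
  exact h

lemma DD_hasDerivAt (p ω y : ℝ) : HasDerivAt (DD p ω) (DD1 p ω y) y := by
  have h := ((P0_hasDerivAt p ω y).const_mul (aa p ω)).add
    (((((hasDerivAt_id y).const_mul (bb p ω)).mul (P1_hasDerivAt p ω y)).mul
      (Sh_hasDerivAt p ω y)))
  refine h.congr_deriv ?_
  simp only [DD1, id_eq, Pi.mul_apply, Pi.add_apply]
  ring

lemma DD1_hasDerivAt (p ω y : ℝ) : HasDerivAt (DD1 p ω) (DD2 p ω y) y := by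
  have hI := (((P2_hasDerivAt p ω y).mul ((Sh_hasDerivAt p ω y).mul
      (Sh_hasDerivAt p ω y))).const_mul (-(2/p) - 1)).add
    ((P1_hasDerivAt p ω y).mul (Ch_hasDerivAt p ω y))
  have h := (((P1_hasDerivAt p ω y).mul (Sh_hasDerivAt p ω y)).const_mul
      (bb p ω - aa p ω * (2/p) * cc p ω)).add
    (((hasDerivAt_id y).mul hI).const_mul (bb p ω * cc p ω))
  refine h.congr_deriv ?_
  simp only [DD2, id_eq, Pi.mul_apply, Pi.add_apply]
  ring

lemma phi_eq (p ω x : ℝ) : phi p ω x = AA p ω ^ (1/p) * P0 p ω x := rfl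

lemma phi_pow (p ω x : ℝ) (hp : 0 < p) (hw : 0 < 1 - ω^2) :
    (phi p ω x) ^ p = AA p ω * (Ch p ω x ^ 2)⁻¹ := by
  have hApos : 0 < AA p ω := by unfold AA; positivity
  have hC : (0:ℝ) < Ch p ω x := Real.cosh_pos _
  rw [phi_eq]; simp only [P0]
  rw [Real.mul_rpow (Real.rpow_nonneg hApos.le _) (Real.rpow_nonneg hC.le _)]
  rw [← Real.rpow_mul hApos.le, ← Real.rpow_mul hC.le]
  rw [show 1/p*p = 1 by field_simp, show -(2/p)*p = -2 by field_simp]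
  rw [Real.rpow_one]
  rw [show (-2:ℝ) = -((2:ℕ):ℝ) by norm_num, Real.rpow_neg hC.le, Real.rpow_natCast]

lemma key_identity (p ω : ℝ) (hp : 0 < p) (hω1 : -1 < ω) (hω2 : ω < 1) (x : ℝ) :
    -(DD2 p ω x) + (1 - ω ^ 2) * DD p ω x
      - (p + 1) * (phi p ω x) ^ p * DD p ω x = 2 * ω * phi p ω x := by
  have hw : 0 < 1 - ω^2 := by nlinarith
  have hk : 0 < kk ω := Real.sqrt_pos.mpr hw
  have hk2 : kk ω ^ 2 = 1 - ω ^ 2 := Real.sq_sqrt hw.le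
  have hApos : 0 < AA p ω := by unfold AA; positivity
  have hC : (0:ℝ) < Ch p ω x := Real.cosh_pos _
  have hS2 : Sh p ω x * Sh p ω x = Ch p ω x ^ 2 - 1 := by
    have h := Real.cosh_sq_sub_sinh_sq (cc p ω * x)
    simp only [Sh, Ch]
    linear_combination -h
  have hch1 : P1 p ω x * Ch p ω x = P0 p ω x := by
    have h := Real.rpow_add_one hC.ne' (-(2/p) - 1)
    rw [show -(2/p) - 1 + 1 = -(2/p) by ring] at h
    simpa [P0, P1] using h.symm
  have hch2 : P2 p ω x * Ch p ω x = P1 p ω x := by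
    have h := Real.rpow_add_one hC.ne' (-(2/p) - 2)
    rw [show -(2/p) - 2 + 1 = -(2/p) - 1 by ring] at h
    simpa [P1, P2] using h.symm
  have hch3 : P3 p ω x * Ch p ω x = P2 p ω x := by
    have h := Real.rpow_add_one hC.ne' (-(2/p) - 3)
    rw [show -(2/p) - 3 + 1 = -(2/p) - 2 by ring] at h
    simpa [P2, P3] using h.symm
  have hP1e : P1 p ω x = P0 p ω x / Ch p ω x := by
    rw [eq_div_iff hC.ne']; exact hch1
  have hP2e : P2 p ω x = P0 p ω x / Ch p ω x ^ 2 := by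
    rw [eq_div_iff (pow_ne_zero 2 hC.ne')]
    linear_combination Ch p ω x * hch2 + hch1
  have hP3e : P3 p ω x = P0 p ω x / Ch p ω x ^ 3 := by
    rw [eq_div_iff (pow_ne_zero 3 hC.ne')]
    linear_combination Ch p ω x ^ 2 * hch3 + Ch p ω x * hch2 + hch1
  have haa1 : AA p ω ^ (1/p - 1) = AA p ω ^ (1/p) / AA p ω := by
    rw [Real.rpow_sub hApos, Real.rpow_one]
  have hAk : AA p ω = (p+2) * kk ω ^ 2 / 2 := by unfold AA; rw [hk2]
  rw [phi_pow p ω x hp hw, phi_eq]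
  simp only [DD, DD2, aa, bb]
  rw [hS2, hP3e, hP2e, hP1e, haa1]
  rw [show (1:ℝ) - ω^2 = kk ω ^ 2 from hk2.symm]
  rw [hAk]
  simp only [cc]
  field_simp
  ring

end DerivFreqAux


open DerivFreqAux

/-- The map `λ ↦ φ_λ(x)` is differentiable on `(-1,1)`, the derivative
`∂_ωφ_ω` satisfies `-∂ₓ²(∂_ωφ_ω) + (1-ω²)∂_ωφ_ω - (p+1)φ_ω^p ∂_ωφ_ω = 2ωφ_ω`,
and hence, for `ω ≠ 0`, `ψ_ω = (1/(2ω))(∂_ωφ_ω, -ω∂_ωφ_ω)` satisfies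
`S_ω''(Φ_ω)ψ_ω = (φ_ω, 0)`. -/
theorem derivative_in_frequency (p ω : ℝ) (hp : 0 < p)
    (hω1 : -1 < ω) (hω2 : ω < 1) :
    (∀ x : ℝ, ∀ l : ℝ, -1 < l → l < 1 →
      DifferentiableAt ℝ (fun m : ℝ => phi p m x) l) ∧
    (∀ x : ℝ,
      -(deriv (deriv (dphi p ω)) x) + (1 - ω ^ 2) * dphi p ω x
        - (p + 1) * (phi p ω x) ^ p * dphi p ω x = 2 * ω * phi p ω x) ∧
    (ω ≠ 0 →
      (∀ x : ℝ,
        -(deriv (deriv (fun x' => 1 / (2 * ω) * dphi p ω x')) x)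
          + 1 / (2 * ω) * dphi p ω x
          - (p + 1) * (phi p ω x) ^ p * (1 / (2 * ω) * dphi p ω x)
          + ω * (1 / (2 * ω) * (-ω * dphi p ω x)) = phi p ω x) ∧
      (∀ x : ℝ,
        1 / (2 * ω) * (-ω * dphi p ω x) + ω * (1 / (2 * ω) * dphi p ω x) = 0)) := by
  have hw : 0 < 1 - ω^2 := by nlinarith
  have hk : 0 < kk ω := Real.sqrt_pos.mpr hw
  have hdphi : dphi p ω = DD p ω := by
    funext y
    have h := (phi_omega_hasDerivAt p y ω hp hω1 hω2).deriv
    simp only [dphi]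
    rw [h]
    simp only [DD, aa, bb, P0, P1, Sh, Ch, cc, kk, AA]
    field_simp
  have hd1 : deriv (dphi p ω) = DD1 p ω := by
    funext y; rw [hdphi]; exact (DD_hasDerivAt p ω y).deriv
  have hd2 : ∀ x, deriv (deriv (dphi p ω)) x = DD2 p ω x := by
    intro x; rw [hd1]; exact (DD1_hasDerivAt p ω x).deriv
  refine ⟨fun x l hl1 hl2 => (phi_omega_hasDerivAt p x l hp hl1 hl2).differentiableAt,
    fun x => ?_, fun hω0 => ⟨fun x => ?_, fun x => ?_⟩⟩
  · rw [hd2 x, hdphi]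
    exact key_identity p ω hp hω1 hω2 x
  · have e1 : (fun x' => 1/(2*ω) * dphi p ω x') = fun x' => 1/(2*ω) * DD p ω x' := by
      funext y; rw [hdphi]
    have e2 : deriv (fun x' => 1/(2*ω) * DD p ω x') = fun y => 1/(2*ω) * DD1 p ω y :=
      funext fun y => ((DD_hasDerivAt p ω y).const_mul (1/(2*ω))).deriv
    have e3 : deriv (deriv (fun x' => 1/(2*ω) * dphi p ω x')) x
        = 1/(2*ω) * DD2 p ω x := by
      rw [e1, e2]; exact ((DD1_hasDerivAt p ω x).const_mul (1/(2*ω))).deriv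
    have key := key_identity p ω hp hω1 hω2 x
    rw [e3, hdphi]
    have h2ω : (2*ω) ≠ 0 := by simp [hω0]
    field_simp
    linear_combination key
  · field_simp; ring
end

section
/- Let p > 0 and let I ⊆ ℝ be an open interval. Suppose u, v : I × ℝ → ℝ are continuously differentiable in (t,x), with u(t,·) three times continuously differentiable in x, solving the generalized Boussinesq system on I × ℝ, and suppose ν : I × ℝ → ℝ is continuously differentiable with ∂_x ν = u and ∂_t ν = v. Assume that u, v, ∂_x u, ∂_x²u, ∂_x³u, ν, ν·v and the products appearing below are, locally uniformly in t, dominated in absolute value by a fixed function in L¹(ℝ) ∩ L²(ℝ), and that ν(t,x)·(−∂_x²u + u − |u|^p u)(t,x) → 0 as |x| → ∞. Then the function I₁(t) = ∫_ℝ ν(t,x)·∂_t ν(t,x) dx is differentiable on I with I₁'(t) = ∫_ℝ v(t,x)² dx − ∫_ℝ u(t,x)² dx − ∫_ℝ (∂_x u(t,x))² dx + ∫_ℝ |u(t,x)|^{p+2} dx. -/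
open MeasureTheory Real Filter Topology

lemma differentiableAt_abs_rpow_mul {p : ℝ} (hp : 0 < p) (y : ℝ) :
    DifferentiableAt ℝ (fun y : ℝ => |y| ^ p * y) y := by
  rcases lt_trichotomy y 0 with hy | rfl | hy
  · have h1 : DifferentiableAt ℝ (fun z : ℝ => (-z) ^ p * z) y := by
      have h2 := (Real.hasDerivAt_rpow_const (x := -y) (p := p)
        (Or.inl (by simpa using hy.ne))).comp y (hasDerivAt_neg y)
      exact h2.differentiableAt.mul differentiableAt_id
    refine h1.congr_of_eventuallyEq ?_
    filter_upwards [Iio_mem_nhds hy] with z hz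
    rw [abs_of_neg hz]
  · have h0 : HasDerivAt (fun y : ℝ => |y| ^ p * y) 0 0 := by
      rw [hasDerivAt_iff_tendsto_slope]
      have hca : ContinuousAt (fun z : ℝ => |z| ^ p) 0 := by
        have h := (Real.continuousAt_rpow_const (|(0:ℝ)|) p
          (Or.inr hp.le)).comp (continuous_abs.continuousAt (x := (0:ℝ)))
        exact h
      have hten : Tendsto (fun z : ℝ => |z| ^ p) (𝓝[≠] (0:ℝ)) (𝓝 0) := by
        have := hca.tendsto
        simp only [abs_zero, Real.zero_rpow hp.ne'] at this
        exact this.mono_left nhdsWithin_le_nhds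
      refine hten.congr' ?_
      filter_upwards [self_mem_nhdsWithin] with z hz
      have hz' : z ≠ 0 := hz
      simp only [slope_def_field, abs_zero, Real.zero_rpow hp.ne', zero_mul, sub_zero]
      rw [mul_div_assoc, div_self hz', mul_one]
    exact h0.differentiableAt
  · have h1 : DifferentiableAt ℝ (fun z : ℝ => z ^ p * z) y :=
      (Real.hasDerivAt_rpow_const (x := y) (p := p)
        (Or.inl hy.ne')).differentiableAt.mul differentiableAt_id
    refine h1.congr_of_eventuallyEq ?_
    filter_upwards [Ioi_mem_nhds hy] with z hz
    rw [abs_of_pos hz]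

/-- Virial identity for `I₁(t) = ∫ ν ∂ₜν dx`, where `∂ₓν = u` and `∂ₜν = v`
and `(u,v)` solves the generalized Boussinesq system
`∂ₜu = ∂ₓv`, `∂ₜv = ∂ₓ(-∂ₓ²u + u - |u|^p u)` on an open interval `I`. -/
theorem virial_identity_I1 (p : ℝ) (hp : 0 < p)
    (I : Set ℝ) (hIopen : IsOpen I) (hIconn : I.OrdConnected)
    (u v ν : ℝ → ℝ → ℝ)
    (hu : ContDiffOn ℝ 1 (fun q : ℝ × ℝ => u q.1 q.2) (I ×ˢ Set.univ))
    (hv : ContDiffOn ℝ 1 (fun q : ℝ × ℝ => v q.1 q.2) (I ×ˢ Set.univ))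
    (hν : ContDiffOn ℝ 1 (fun q : ℝ × ℝ => ν q.1 q.2) (I ×ˢ Set.univ))
    (hu3 : ∀ t ∈ I, ContDiff ℝ 3 (u t))
    (heq1 : ∀ t ∈ I, ∀ x : ℝ, deriv (fun s => u s x) t = deriv (v t) x)
    (heq2 : ∀ t ∈ I, ∀ x : ℝ,
      deriv (fun s => v s x) t
        = deriv (fun x' => -(deriv (deriv (u t)) x') + u t x'
            - |u t x'| ^ p * u t x') x)
    (hνx : ∀ t ∈ I, ∀ x : ℝ, deriv (ν t) x = u t x)
    (hνt : ∀ t ∈ I, ∀ x : ℝ, deriv (fun s => ν s x) t = v t x)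
    (hdom : ∀ t₀ ∈ I, ∃ δ > 0, ∃ g : ℝ → ℝ,
      Integrable g ∧ Integrable (fun x => (g x) ^ 2) ∧
      ∀ t ∈ I, |t - t₀| < δ → ∀ x : ℝ,
        |u t x| ≤ g x ∧ |v t x| ≤ g x ∧ |deriv (u t) x| ≤ g x ∧
        |deriv (deriv (u t)) x| ≤ g x ∧
        |deriv (deriv (deriv (u t))) x| ≤ g x ∧
        |ν t x| ≤ g x ∧ |ν t x * v t x| ≤ g x ∧
        |v t x| ^ 2 ≤ g x ∧ |u t x| ^ 2 ≤ g x ∧ |deriv (u t) x| ^ 2 ≤ g x ∧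
        |u t x| ^ (p + 2) ≤ g x ∧
        |ν t x * deriv (fun s => v s x) t| ≤ g x)
    (hdecay : ∀ t ∈ I,
      Tendsto (fun x => ν t x * (-(deriv (deriv (u t)) x) + u t x
        - |u t x| ^ p * u t x)) (cocompact ℝ) (nhds 0)) :
    ∀ t ∈ I,
      HasDerivAt (fun s => ∫ x : ℝ, ν s x * deriv (fun r => ν r x) s)
        ((∫ x : ℝ, (v t x) ^ 2) - (∫ x : ℝ, (u t x) ^ 2)
          - (∫ x : ℝ, (deriv (u t) x) ^ 2)
          + ∫ x : ℝ, |u t x| ^ (p + 2)) t := by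
  intro t ht
  obtain ⟨δ, hδ, g, hg1, hg2, hgb⟩ := hdom t ht
  obtain ⟨ε₀, hε₀, hball⟩ := Metric.isOpen_iff.mp hIopen t ht
  set ε := min δ ε₀ with hεdef
  have hεpos : 0 < ε := lt_min hδ hε₀
  have hballI : ∀ s ∈ Metric.ball t ε, s ∈ I := fun s hs =>
    hball (Metric.ball_subset_ball (min_le_right _ _) hs)
  have hballδ : ∀ s ∈ Metric.ball t ε, |s - t| < δ := by
    intro s hs
    have h := Metric.mem_ball.mp hs
    rw [Real.dist_eq] at h
    exact lt_of_lt_of_le h (min_le_left _ _)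
  have htδ : |t - t| < δ := by simpa using hδ
  -- joint differentiability in each variable separately
  have hopen : IsOpen (I ×ˢ (Set.univ : Set ℝ)) := hIopen.prod isOpen_univ
  have keyD : ∀ w : ℝ → ℝ → ℝ,
      ContDiffOn ℝ 1 (fun q : ℝ × ℝ => w q.1 q.2) (I ×ˢ Set.univ) →
      ∀ s ∈ I, ∀ x : ℝ, DifferentiableAt ℝ (fun q : ℝ × ℝ => w q.1 q.2) (s, x) := by
    intro w hw s hs x
    exact (hw.differentiableOn one_ne_zero).differentiableAt
      (hopen.mem_nhds (by simp [hs]))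
  have keyT : ∀ w : ℝ → ℝ → ℝ,
      ContDiffOn ℝ 1 (fun q : ℝ × ℝ => w q.1 q.2) (I ×ˢ Set.univ) →
      ∀ s ∈ I, ∀ x : ℝ, DifferentiableAt ℝ (fun r => w r x) s := by
    intro w hw s hs x
    exact (keyD w hw s hs x).comp s (by have h : DifferentiableAt ℝ (fun r : ℝ => (r, x)) s := DifferentiableAt.prodMk differentiableAt_id (differentiableAt_const x); exact h)
  have keyX : ∀ w : ℝ → ℝ → ℝ,
      ContDiffOn ℝ 1 (fun q : ℝ × ℝ => w q.1 q.2) (I ×ˢ Set.univ) →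
      ∀ s ∈ I, ∀ x : ℝ, DifferentiableAt ℝ (w s) x := by
    intro w hw s hs x
    exact (keyD w hw s hs x).comp x (DifferentiableAt.prodMk (differentiableAt_const s) differentiableAt_id)
  have hcν : ∀ s ∈ I, Continuous (ν s) :=
    fun s hs => Differentiable.continuous (fun x => keyX ν hν s hs x)
  have hcv : ∀ s ∈ I, Continuous (v s) :=
    fun s hs => Differentiable.continuous (fun x => keyX v hv s hs x)
  -- regularity of u t
  have h3 : ContDiff ℝ 3 (u t) := hu3 t ht
  have hud : Differentiable ℝ (u t) := h3.differentiable (by norm_num)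
  have h2' : ContDiff ℝ 2 (deriv (u t)) :=
    (contDiff_succ_iff_deriv.mp (show ContDiff ℝ (2 + 1) (u t) by norm_num [h3])).2.2
  have hu'd : Differentiable ℝ (deriv (u t)) := h2'.differentiable (by norm_num)
  have h1' : ContDiff ℝ 1 (deriv (deriv (u t))) :=
    (contDiff_succ_iff_deriv.mp (show ContDiff ℝ (1 + 1) (deriv (u t)) by norm_num [h2'])).2.2
  have hu''d : Differentiable ℝ (deriv (deriv (u t))) := h1'.differentiable one_ne_zero
  have hcu : Continuous (u t) := hud.continuous
  have hcu' : Continuous (deriv (u t)) := hu'd.continuous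
  have hcu'' : Continuous (deriv (deriv (u t))) := hu''d.continuous
  -- the nonlinearity
  set F : ℝ → ℝ := fun x' => -(deriv (deriv (u t)) x') + u t x'
      - |u t x'| ^ p * u t x' with hFdef
  have hFd : ∀ x, DifferentiableAt ℝ F x := fun x =>
    ((hu''d x).neg.add (hud x)).sub
      ((differentiableAt_abs_rpow_mul hp (u t x)).comp x (hud x))
  have heq2' : ∀ x, deriv (fun s => v s x) t = deriv F x := fun x => heq2 t ht x
  have hdFm : Measurable (deriv F) := measurable_deriv F
  have hrp : ∀ a : ℝ, a * (|a| ^ p * a) = |a| ^ (p + 2) := by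
    intro a
    rw [Real.rpow_add' (abs_nonneg a) (by positivity),
      show |a| ^ (2 : ℝ) = a ^ 2 by
        rw [show (2 : ℝ) = ((2 : ℕ) : ℝ) by norm_num, Real.rpow_natCast, sq_abs]]
    ring
  -- integrability helpers
  have mono1 : ∀ f : ℝ → ℝ, AEStronglyMeasurable f volume →
      (∀ x, |f x| ≤ g x) → Integrable f := fun f hm hb =>
    hg1.mono' hm (ae_of_all _ fun x => by simpa [Real.norm_eq_abs] using hb x)
  have mono2 : ∀ f : ℝ → ℝ, AEStronglyMeasurable f volume →
      (∀ x, |f x| ≤ g x ^ 2) → Integrable f := fun f hm hb =>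
    hg2.mono' hm (ae_of_all _ fun x => by simpa [Real.norm_eq_abs] using hb x)
  -- integrable functions at time t
  have hint_uu'' : Integrable (fun x => u t x * deriv (deriv (u t)) x) := by
    refine mono2 _ (hcu.mul hcu'').aestronglyMeasurable fun x => ?_
    obtain ⟨b1, b2, b3, b4, b5, b6, b7, b8, b9, b10, b11, b12⟩ := hgb t ht htδ x
    rw [abs_mul, pow_two]
    exact mul_le_mul b1 b4 (abs_nonneg _) ((abs_nonneg _).trans b1)
  have hint_usq : Integrable (fun x => (u t x) ^ 2) := by
    refine mono1 _ (hcu.pow 2).aestronglyMeasurable fun x => ?_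
    obtain ⟨b1, b2, b3, b4, b5, b6, b7, b8, b9, b10, b11, b12⟩ := hgb t ht htδ x
    rwa [abs_of_nonneg (sq_nonneg _), ← sq_abs]
  have hint_u'mul : Integrable (fun x => deriv (u t) x * deriv (u t) x) := by
    refine mono1 _ (hcu'.mul hcu').aestronglyMeasurable fun x => ?_
    obtain ⟨b1, b2, b3, b4, b5, b6, b7, b8, b9, b10, b11, b12⟩ := hgb t ht htδ x
    rwa [abs_mul, ← pow_two]
  have hint_vmul : Integrable (fun x => v t x * v t x) := by
    refine mono1 _ ((hcv t ht).mul (hcv t ht)).aestronglyMeasurable fun x => ?_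
    obtain ⟨b1, b2, b3, b4, b5, b6, b7, b8, b9, b10, b11, b12⟩ := hgb t ht htδ x
    rwa [abs_mul, ← pow_two]
  have hint_up2 : Integrable (fun x => |u t x| ^ (p + 2)) := by
    refine mono1 _ ((hcu.abs.rpow_const fun x => Or.inr (by positivity)).aestronglyMeasurable)
      fun x => ?_
    obtain ⟨b1, b2, b3, b4, b5, b6, b7, b8, b9, b10, b11, b12⟩ := hgb t ht htδ x
    rwa [abs_of_nonneg (Real.rpow_nonneg (abs_nonneg _) _)]
  have hint_nudF : Integrable (fun x => ν t x * deriv F x) := by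
    refine mono1 _ ((hcν t ht).aestronglyMeasurable.mul hdFm.aestronglyMeasurable)
      fun x => ?_
    obtain ⟨b1, b2, b3, b4, b5, b6, b7, b8, b9, b10, b11, b12⟩ := hgb t ht htδ x
    rw [← heq2' x]
    exact b12
  have huF_eq : (fun x => u t x * F x)
      = fun x => -(u t x * deriv (deriv (u t)) x) + (u t x) ^ 2 - |u t x| ^ (p + 2) := by
    funext x
    rw [show F x = -(deriv (deriv (u t)) x) + u t x - |u t x| ^ p * u t x from rfl,
      ← hrp (u t x)]
    ring
  have hint_uF : Integrable (fun x => u t x * F x) := by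
    rw [huF_eq]
    exact (hint_uu''.neg.add hint_usq).sub hint_up2
  have hint_H' : Integrable (fun x => u t x * F x + ν t x * deriv F x) :=
    hint_uF.add hint_nudF
  have hint_K : Integrable (fun x => u t x * deriv (u t) x) := by
    refine mono2 _ (hcu.mul hcu').aestronglyMeasurable fun x => ?_
    obtain ⟨b1, b2, b3, b4, b5, b6, b7, b8, b9, b10, b11, b12⟩ := hgb t ht htδ x
    rw [abs_mul, pow_two]
    exact mul_le_mul b1 b3 (abs_nonneg _) ((abs_nonneg _).trans b1)
  have hint_K' : Integrable (fun x => deriv (u t) x * deriv (u t) x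
      + u t x * deriv (deriv (u t)) x) := hint_u'mul.add hint_uu''
  -- first integration by parts : ∫ (u F + ν F') = 0
  have hHder : ∀ x, HasDerivAt (fun y => ν t y * F y)
      (u t x * F x + ν t x * deriv F x) x := by
    intro x
    have hν' : HasDerivAt (ν t) (u t x) x := by
      have h := (keyX ν hν t ht x).hasDerivAt
      rwa [hνx t ht x] at h
    exact hν'.mul (hFd x).hasDerivAt
  have hHtop : Tendsto (fun x => ν t x * F x) atTop (𝓝 0) :=
    (hdecay t ht).mono_left _root_.atTop_le_cocompact
  have hHbot : Tendsto (fun x => ν t x * F x) atBot (𝓝 0) :=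
    (hdecay t ht).mono_left _root_.atBot_le_cocompact
  have hIBP1 : ∫ x : ℝ, (u t x * F x + ν t x * deriv F x) = 0 := by
    have h := integral_of_hasDerivAt_of_tendsto hHder hint_H' hHbot hHtop
    simpa using h
  have hsplit1 : (∫ x : ℝ, u t x * F x) + ∫ x : ℝ, ν t x * deriv F x = 0 := by
    rw [← integral_add hint_uF hint_nudF]
    exact hIBP1
  -- second integration by parts : ∫ (u'² + u u'') = 0
  have hKder : ∀ x, HasDerivAt (fun y => u t y * deriv (u t) y)
      (deriv (u t) x * deriv (u t) x + u t x * deriv (deriv (u t)) x) x :=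
    fun x => (hud x).hasDerivAt.mul (hu'd x).hasDerivAt
  have hIBP2 : ∫ x : ℝ, (deriv (u t) x * deriv (u t) x
      + u t x * deriv (deriv (u t)) x) = 0 :=
    integral_eq_zero_of_hasDerivAt_of_integrable hKder hint_K' hint_K
  have hsplit2 : (∫ x : ℝ, deriv (u t) x * deriv (u t) x)
      + ∫ x : ℝ, u t x * deriv (deriv (u t)) x = 0 := by
    rw [← integral_add hint_u'mul hint_uu'']
    exact hIBP2
  -- differentiation under the integral sign
  have hint_nuv : Integrable (fun x => ν t x * v t x) := by
    refine mono1 _ ((hcν t ht).mul (hcv t ht)).aestronglyMeasurable fun x => ?_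
    obtain ⟨b1, b2, b3, b4, b5, b6, b7, b8, b9, b10, b11, b12⟩ := hgb t ht htδ x
    exact b7
  have hF'meas : AEStronglyMeasurable
      (fun x => v t x * v t x + ν t x * deriv (fun r => v r x) t) volume := by
    have heqf : (fun x => v t x * v t x + ν t x * deriv (fun r => v r x) t)
        = fun x => v t x * v t x + ν t x * deriv F x := by
      funext x; rw [heq2' x]
    rw [heqf]
    exact ((hcv t ht).mul (hcv t ht)).aestronglyMeasurable.add
      (((hcν t ht).aestronglyMeasurable).mul hdFm.aestronglyMeasurable)
  have hparam := hasDerivAt_integral_of_dominated_loc_of_deriv_le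
    (μ := volume) (F := fun s x => ν s x * v s x)
    (F' := fun s x => v s x * v s x + ν s x * deriv (fun r => v r x) s)
    (x₀ := t) (bound := fun x => g x + g x) (Metric.ball_mem_nhds t hεpos)
    (by
      filter_upwards [hIopen.mem_nhds ht] with s hs
      exact ((hcν s hs).mul (hcv s hs)).aestronglyMeasurable)
    hint_nuv hF'meas
    (by
      refine ae_of_all _ fun x s hs => ?_
      have hsI := hballI s hs
      obtain ⟨b1, b2, b3, b4, b5, b6, b7, b8, b9, b10, b11, b12⟩ :=
        hgb s hsI (hballδ s hs) x
      have h1 : |v s x * v s x| ≤ g x := by rwa [abs_mul, ← pow_two]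
      calc ‖v s x * v s x + ν s x * deriv (fun r => v r x) s‖
          ≤ |v s x * v s x| + |ν s x * deriv (fun r => v r x) s| := norm_add_le _ _
        _ ≤ g x + g x := add_le_add h1 b12)
    (hg1.add hg1)
    (by
      refine ae_of_all _ fun x s hs => ?_
      have hsI := hballI s hs
      have h1 : HasDerivAt (fun r => ν r x) (v s x) s := by
        have h := (keyT ν hν s hsI x).hasDerivAt
        rwa [hνt s hsI x] at h
      have h2 : HasDerivAt (fun r => v r x) (deriv (fun r => v r x) s) s :=
        (keyT v hv s hsI x).hasDerivAt
      exact h1.mul h2)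
  have hmain := hparam.2
  -- identify the derivative value
  have hint_nudF' : Integrable (fun x => ν t x * deriv (fun r => v r x) t) := by
    have heqf : (fun x => ν t x * deriv (fun r => v r x) t)
        = fun x => ν t x * deriv F x := by funext x; rw [heq2' x]
    rw [heqf]; exact hint_nudF
  have hval : (∫ x : ℝ, (v t x * v t x + ν t x * deriv (fun r => v r x) t))
      = (∫ x : ℝ, (v t x) ^ 2) - (∫ x : ℝ, (u t x) ^ 2)
        - (∫ x : ℝ, (deriv (u t) x) ^ 2) + ∫ x : ℝ, |u t x| ^ (p + 2) := by
    rw [integral_add hint_vmul hint_nudF']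
    have e1 : (∫ x : ℝ, v t x * v t x) = ∫ x : ℝ, (v t x) ^ 2 := by
      refine integral_congr_ae (ae_of_all _ fun x => ?_)
      show v t x * v t x = (v t x) ^ 2; rw [pow_two]
    have e2 : (∫ x : ℝ, ν t x * deriv (fun r => v r x) t)
        = ∫ x : ℝ, ν t x * deriv F x := by
      refine integral_congr_ae (ae_of_all _ fun x => ?_)
      show ν t x * deriv (fun r => v r x) t = ν t x * deriv F x; rw [heq2' x]
    have e3 : (∫ x : ℝ, u t x * F x)
        = -(∫ x : ℝ, u t x * deriv (deriv (u t)) x) + (∫ x : ℝ, (u t x) ^ 2)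
          - ∫ x : ℝ, |u t x| ^ (p + 2) := by
      have hiA : Integrable (fun x => -(u t x * deriv (deriv (u t)) x)) volume :=
        hint_uu''.neg
      have hiB : Integrable
          (fun x => -(u t x * deriv (deriv (u t)) x) + u t x ^ 2) volume :=
        hiA.add hint_usq
      rw [huF_eq, integral_sub hiB hint_up2, integral_add hiA hint_usq, integral_neg]
    have e4 : (∫ x : ℝ, deriv (u t) x * deriv (u t) x)
        = ∫ x : ℝ, (deriv (u t) x) ^ 2 := by
      refine integral_congr_ae (ae_of_all _ fun x => ?_)
      show deriv (u t) x * deriv (u t) x = (deriv (u t) x) ^ 2; rw [pow_two]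
    rw [e1, e2]
    linarith [hsplit1, hsplit2, e3, e4]
  rw [hval] at hmain
  refine hmain.congr_of_eventuallyEq ?_
  filter_upwards [hIopen.mem_nhds ht] with s hs
  refine integral_congr_ae (ae_of_all _ fun x => ?_)
  show ν s x * deriv (fun r => ν r x) s = ν s x * v s x
  rw [hνt s hs x]
end

section
/- Let p > 0 and let I ⊆ ℝ be an open interval. Suppose u, v : I × ℝ → ℝ are continuously differentiable in (t,x), with u(t,·) three times continuously differentiable in x, solving the generalized Boussinesq system on I × ℝ, with u, v, ∂_x u, ∂_x²u, ∂_x³u, ∂_x v dominated locally uniformly in t by a fixed function in L¹(ℝ) ∩ L²(ℝ) and tending to 0 as |x| → ∞. Let φ ∈ C³(ℝ) with φ, φ', φ'', φ''' bounded, and let y : I → ℝ be continuously differentiable. Then I₂(t) = ∫_ℝ φ(x − y(t))·u(t,x)·v(t,x) dx is differentiable on I with I₂'(t) = −ẏ(t)·∫_ℝ φ'(x−y(t))·u·v dx − (1/2)∫_ℝ φ'(x−y(t))·( 3(∂_x u)² + v² + u² − (2(p+1)/(p+2))·|u|^{p+2} ) dx + (1/2)∫_ℝ φ'''(x−y(t))·u²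 dx. -/
open MeasureTheory Real Filter

section VirialAux
variable {p : ℝ}

lemma vaux_hasDerivAt_abs_rpow_mul (hp : 0 < p) (r : ℝ) :
    HasDerivAt (fun r : ℝ => |r| ^ p * r) ((p + 1) * |r| ^ p) r := by
  rcases lt_trichotomy r 0 with hr | rfl | hr
  · have h2 : HasDerivAt (fun y : ℝ => y ^ (p + 1)) ((p + 1) * (-r) ^ p) (-r) := by
      have := Real.hasDerivAt_rpow_const (x := -r) (p := p + 1) (Or.inl (by intro h; nlinarith))
      simpa using this
    have h3 : HasDerivAt (fun x : ℝ => -((-x) ^ (p + 1))) ((p + 1) * (-r) ^ p) r := by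
      have h4 := (h2.comp r ((hasDerivAt_id r).neg)).fun_neg
      simpa [Function.comp_def] using h4
    have heq : (fun x : ℝ => -((-x) ^ (p + 1))) =ᶠ[nhds r] (fun x : ℝ => |x| ^ p * x) := by
      filter_upwards [eventually_lt_nhds hr] with x hx
      rw [abs_of_neg hx, Real.rpow_add_one (by intro h; nlinarith : (-x) ≠ 0) p]
      ring_nf
    have := h3.congr_of_eventuallyEq heq.symm
    simpa [abs_of_neg hr] using this
  · rw [hasDerivAt_iff_tendsto_slope]
    have : (fun y : ℝ => |y| ^ p) =ᶠ[nhdsWithin 0 {(0:ℝ)}ᶜ] slope (fun r : ℝ => |r| ^ p * r) 0 := by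
      filter_upwards [self_mem_nhdsWithin] with x hx
      simp only [Set.mem_compl_iff, Set.mem_singleton_iff] at hx
      rw [slope_def_field]
      field_simp
      simp
    refine Tendsto.congr' this ?_
    have hcont : Tendsto (fun y : ℝ => |y| ^ p) (nhds 0) (nhds (|(0:ℝ)| ^ p)) := by
      exact ((Real.continuousAt_rpow_const _ p (Or.inr hp.le)).comp continuous_abs.continuousAt)
    rw [abs_zero, Real.zero_rpow hp.ne'] at hcont
    have : (p + 1) * |(0:ℝ)| ^ p = 0 := by simp [Real.zero_rpow hp.ne']
    rw [this]
    exact hcont.mono_left nhdsWithin_le_nhds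
  · have h2 : HasDerivAt (fun y : ℝ => y ^ (p + 1)) ((p + 1) * r ^ p) r := by
      have := Real.hasDerivAt_rpow_const (x := r) (p := p + 1) (Or.inl (by intro h; nlinarith))
      simpa using this
    have heq : (fun x : ℝ => x ^ (p + 1)) =ᶠ[nhds r] (fun x : ℝ => |x| ^ p * x) := by
      filter_upwards [eventually_gt_nhds hr] with x hx
      rw [abs_of_pos hx, Real.rpow_add_one (ne_of_gt hx) p]
    have := h2.congr_of_eventuallyEq heq.symm
    simpa [abs_of_pos hr] using this

lemma vaux_abs_rpow_mul_self (hp : 0 < p) (r : ℝ) : |r| ^ p * r * r = |r| ^ (p + 2) := by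
  rcases eq_or_ne r 0 with rfl | hr
  · simp [Real.zero_rpow, hp.ne', (by positivity : p + 2 ≠ 0)]
  · have : |r| ^ (p + 2) = |r| ^ p * |r| ^ (2:ℝ) := by
      rw [← Real.rpow_add (abs_pos.2 hr)]
    rw [this]
    have : |r| ^ (2:ℝ) = r * r := by
      rw [show (2:ℝ) = ((2:ℕ):ℝ) by norm_num, Real.rpow_natCast]
      rw [sq_abs]; ring
    rw [this]; ring

end VirialAux

lemma vaux_integral_deriv_eq_zero {F F' : ℝ → ℝ} (hF : ∀ x, HasDerivAt F (F' x) x)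
    (hint : Integrable F') (hbot : Tendsto F atBot (nhds 0))
    (htop : Tendsto F atTop (nhds 0)) : ∫ x, F' x = 0 := by
  have h1 : ∫ x in Set.Ioi (0:ℝ), F' x = 0 - F 0 :=
    integral_Ioi_of_hasDerivAt_of_tendsto (hF 0).continuousAt.continuousWithinAt
      (fun x _ => hF x) hint.integrableOn htop
  have h2 : ∫ x in Set.Iic (0:ℝ), F' x = F 0 - 0 :=
    integral_Iic_of_hasDerivAt_of_tendsto (hF 0).continuousAt.continuousWithinAt
      (fun x _ => hF x) hint.integrableOn hbot
  rw [← intervalIntegral.integral_Iic_add_Ioi (b := (0:ℝ)) hint.integrableOn hint.integrableOn, h1, h2]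
  ring

lemma vaux_tendsto_bdd_mul_zero {f h : ℝ → ℝ} {M : ℝ} {l : Filter ℝ} (hf : ∀ x, |f x| ≤ M)
    (hh : Tendsto h l (nhds 0)) : Tendsto (fun x => f x * h x) l (nhds 0) := by
  have hb : Tendsto (fun x => M * |h x|) l (nhds 0) := by
    have := hh.abs.const_mul M
    simpa using this
  refine squeeze_zero_norm (fun x => ?_) hb
  rw [norm_mul]
  exact mul_le_mul_of_nonneg_right (hf x) (abs_nonneg _)

lemma vaux_integrable_of_le {f g : ℝ → ℝ} {K : ℝ}
    (hg2 : Integrable (fun x => g x ^ 2))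
    (hmeas : AEStronglyMeasurable f (volume : Measure ℝ))
    (hbd : ∀ x, |f x| ≤ K * g x ^ 2) : Integrable f := by
  refine (hg2.const_mul K).mono' hmeas (Eventually.of_forall fun x => ?_)
  simpa using hbd x

/-- whole-line integration by parts -/
lemma vaux_key {ψ ψ' h h' g : ℝ → ℝ} {M K : ℝ}
    (hψd : ∀ x, HasDerivAt ψ (ψ' x) x) (hhd : ∀ x, HasDerivAt h (h' x) x)
    (hψ'c : Continuous ψ') (hh'c : Continuous h')
    (hψM : ∀ x, |ψ x| ≤ M) (hψ'M : ∀ x, |ψ' x| ≤ M)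
    (hhK : ∀ x, |h x| ≤ K * g x ^ 2) (hh'K : ∀ x, |h' x| ≤ K * g x ^ 2)
    (hg2 : Integrable (fun x => g x ^ 2))
    (hh0bot : Tendsto h atBot (nhds 0)) (hh0top : Tendsto h atTop (nhds 0)) :
    ∫ x, ψ x * h' x = - ∫ x, ψ' x * h x := by
  have hψc : Continuous ψ := by
    exact continuous_iff_continuousAt.2 fun x => (hψd x).continuousAt
  have hhc : Continuous h := by
    exact continuous_iff_continuousAt.2 fun x => (hhd x).continuousAt
  have i1 : Integrable (fun x => ψ' x * h x) :=
    vaux_integrable_of_le (K := M * K) hg2 (hψ'c.mul hhc).aestronglyMeasurable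
      (fun x => by
        rw [abs_mul, mul_assoc]
        exact mul_le_mul (hψ'M x) (hhK x) (abs_nonneg _)
          ((abs_nonneg (ψ' 0)).trans (hψ'M 0)))
  have i2 : Integrable (fun x => ψ x * h' x) :=
    vaux_integrable_of_le (K := M * K) hg2 (hψc.mul hh'c).aestronglyMeasurable
      (fun x => by
        rw [abs_mul, mul_assoc]
        exact mul_le_mul (hψM x) (hh'K x) (abs_nonneg _)
          ((abs_nonneg (ψ 0)).trans (hψM 0)))
  have h0 := vaux_integral_deriv_eq_zero (F := fun x => ψ x * h x)
    (F' := fun x => ψ' x * h x + ψ x * h' x)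
    (fun x => (hψd x).mul (hhd x)) (i1.add i2)
    (vaux_tendsto_bdd_mul_zero hψM hh0bot) (vaux_tendsto_bdd_mul_zero hψM hh0top)
  rw [integral_add i1 i2] at h0
  linarith

/-- `∫ ψ f f' = -(1/2) ∫ ψ' f²` -/
lemma vaux_ibp_half {ψ ψ' f f' g : ℝ → ℝ} {M : ℝ}
    (hψd : ∀ x, HasDerivAt ψ (ψ' x) x) (hfd : ∀ x, HasDerivAt f (f' x) x)
    (hψ'c : Continuous ψ') (hf'c : Continuous f')
    (hψM : ∀ x, |ψ x| ≤ M) (hψ'M : ∀ x, |ψ' x| ≤ M)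
    (hfg : ∀ x, |f x| ≤ g x) (hf'g : ∀ x, |f' x| ≤ g x)
    (hg2 : Integrable (fun x => g x ^ 2))
    (hf0bot : Tendsto f atBot (nhds 0)) (hf0top : Tendsto f atTop (nhds 0)) :
    ∫ x, ψ x * (f x * f' x) = -(1/2) * ∫ x, ψ' x * (f x) ^ 2 := by
  have hfc : Continuous f := continuous_iff_continuousAt.2 fun x => (hfd x).continuousAt
  have hgnn : ∀ x, 0 ≤ g x := fun x => (abs_nonneg _).trans (hfg x)
  have hbd : ∀ x : ℝ, |2 * (f x * f' x)| ≤ 2 * g x ^ 2 := fun x => by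
    rw [abs_mul, abs_mul, sq, abs_two]
    exact mul_le_mul_of_nonneg_left
      (mul_le_mul (hfg x) (hf'g x) (abs_nonneg _) (hgnn x)) (by norm_num)
  have hbd2 : ∀ x : ℝ, |(f x) ^ 2| ≤ 2 * g x ^ 2 := fun x => by
    rw [abs_pow]
    nlinarith [pow_le_pow_left₀ (abs_nonneg (f x)) (hfg x) 2, sq_nonneg (g x)]
  have hder : ∀ x : ℝ, HasDerivAt (fun x => (f x) ^ 2) (2 * (f x * f' x)) x := fun x => by
    have := (hfd x).fun_pow 2
    refine this.congr_deriv ?_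
    ring
  have hkey := vaux_key (g := g) (M := M) (K := 2) hψd hder hψ'c
    (continuous_const.mul (hfc.mul hf'c)) hψM hψ'M hbd2 hbd hg2
    (by simpa using hf0bot.pow 2) (by simpa using hf0top.pow 2)
  have hl : ∫ x, ψ x * (2 * (f x * f' x)) = 2 * ∫ x, ψ x * (f x * f' x) := by
    rw [← MeasureTheory.integral_const_mul]
    congr 1; funext x; ring
  rw [hl] at hkey
  linarith

/-- pointwise square bound from L² control of f and f' -/
lemma vaux_sq_le {f f' g : ℝ → ℝ} (hd : ∀ x, HasDerivAt f (f' x) x)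
    (hc : Continuous f') (hfg : ∀ x, |f x| ≤ g x) (hf'g : ∀ x, |f' x| ≤ g x)
    (hg2 : Integrable (fun x => g x ^ 2)) (hdecay : Tendsto f atTop (nhds 0)) (x : ℝ) :
    f x ^ 2 ≤ 2 * ∫ x, g x ^ 2 := by
  have hfc : Continuous f := continuous_iff_continuousAt.2 fun x => (hd x).continuousAt
  have hgnn : ∀ x, 0 ≤ g x := fun x => (abs_nonneg _).trans (hfg x)
  have hder : ∀ y : ℝ, HasDerivAt (fun z => (f z) ^ 2) (2 * (f y * f' y)) y := fun y => by
    have := (hd y).fun_pow 2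
    refine this.congr_deriv ?_
    ring
  have hbd : ∀ y : ℝ, |2 * (f y * f' y)| ≤ 2 * g y ^ 2 := fun y => by
    rw [abs_mul, abs_mul, sq, abs_two]
    exact mul_le_mul_of_nonneg_left
      (mul_le_mul (hfg y) (hf'g y) (abs_nonneg _) (hgnn y)) (by norm_num)
  have hintfull : Integrable (fun y => 2 * (f y * f' y)) :=
    vaux_integrable_of_le (K := 2) hg2
      ((continuous_const.mul (hfc.mul hc))).aestronglyMeasurable hbd
  have h2g2 : Integrable (fun y : ℝ => 2 * g y ^ 2) := hg2.const_mul 2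
  have h0 : Tendsto (fun z => f z ^ 2) atTop (nhds 0) := by simpa using hdecay.pow 2
  have heq := integral_Ioi_of_hasDerivAt_of_tendsto (a := x)
    ((hfc.pow 2).continuousWithinAt) (fun y _ => hder y) hintfull.integrableOn h0
  have hfx : f x ^ 2 = - ∫ y in Set.Ioi x, 2 * (f y * f' y) := by
    rw [heq, Pi.pow_apply]; ring
  have step1 : f x ^ 2 ≤ ∫ y in Set.Ioi x, |2 * (f y * f' y)| := by
    rw [hfx]
    calc - ∫ y in Set.Ioi x, 2 * (f y * f' y)
        ≤ ‖∫ y in Set.Ioi x, 2 * (f y * f' y)‖ := neg_le_abs _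
      _ ≤ ∫ y in Set.Ioi x, ‖2 * (f y * f' y)‖ := norm_integral_le_integral_norm _
      _ = ∫ y in Set.Ioi x, |2 * (f y * f' y)| := rfl
  have step2 : ∫ y in Set.Ioi x, |2 * (f y * f' y)| ≤ ∫ y in Set.Ioi x, 2 * g y ^ 2 :=
    integral_mono hintfull.norm.integrableOn h2g2.integrableOn hbd
  have step3 : ∫ y in Set.Ioi x, 2 * g y ^ 2 ≤ ∫ y, 2 * g y ^ 2 :=
    setIntegral_le_integral h2g2 (Eventually.of_forall fun y => by positivity)
  have step4 : ∫ y, 2 * g y ^ 2 = 2 * ∫ y, g y ^ 2 := MeasureTheory.integral_const_mul 2 _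
  linarith

lemma vaux_cont_abs_rpow {p : ℝ} (hp : 0 ≤ p) : Continuous (fun r : ℝ => |r| ^ p) :=
  (Real.continuous_rpow_const hp).comp continuous_abs

lemma vaux_int_congr {f g : ℝ → ℝ} (h : ∀ x, f x = g x) : ∫ x, f x = ∫ x, g x := by
  congr 1; funext x; exact h x

lemma vaux_reg3 {f : ℝ → ℝ} (hf : ContDiff ℝ 3 f) :
    (∀ x, HasDerivAt f (deriv f x) x) ∧ (∀ x, HasDerivAt (deriv f) (deriv (deriv f) x) x) ∧
    (∀ x, HasDerivAt (deriv (deriv f)) (deriv (deriv (deriv f)) x) x) ∧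
    Continuous f ∧
    Continuous (deriv f) ∧ Continuous (deriv (deriv f)) ∧
    Continuous (deriv (deriv (deriv f))) := by
  have h1 : Differentiable ℝ f := hf.differentiable (by norm_num)
  have hd2 : ContDiff ℝ 2 (deriv f) := by
    have e : (3 : WithTop ℕ∞) = 2 + 1 := by norm_num
    rw [e] at hf
    exact (contDiff_succ_iff_deriv.1 hf).2.2
  have h1' : Differentiable ℝ (deriv f) := hd2.differentiable (by norm_num)
  have hd1 : ContDiff ℝ 1 (deriv (deriv f)) := by
    have e : (2 : WithTop ℕ∞) = 1 + 1 := by norm_num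
    rw [e] at hd2
    exact (contDiff_succ_iff_deriv.1 hd2).2.2
  have h1'' : Differentiable ℝ (deriv (deriv f)) := hd1.differentiable one_ne_zero
  refine ⟨fun x => (h1 x).hasDerivAt, fun x => (h1' x).hasDerivAt,
    fun x => (h1'' x).hasDerivAt, hf.continuous, hd2.continuous, hd1.continuous, ?_⟩
  exact hd1.continuous_deriv le_rfl

lemma vaux_int5 {f1 f2 f3 f4 f5 : ℝ → ℝ} (h1 : Integrable f1) (h2 : Integrable f2)
    (h3 : Integrable f3) (h4 : Integrable f4) (h5 : Integrable f5) :
    ∫ x, (f1 x + f2 x + f3 x + f4 x + f5 x)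
      = (∫ x, f1 x) + (∫ x, f2 x) + (∫ x, f3 x) + (∫ x, f4 x) + ∫ x, f5 x := by
  have i12 : Integrable (fun x => f1 x + f2 x) := h1.add h2
  have i123 : Integrable (fun x => f1 x + f2 x + f3 x) := i12.add h3
  have i1234 : Integrable (fun x => f1 x + f2 x + f3 x + f4 x) := i123.add h4
  rw [integral_add i1234 h5, integral_add i123 h4, integral_add i12 h3, integral_add h1 h2]

lemma vaux_int4 {f1 f2 f3 f4 : ℝ → ℝ} (h1 : Integrable f1) (h2 : Integrable f2)
    (h3 : Integrable f3) (h4 : Integrable f4) :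
    ∫ x, (f1 x + f2 x + f3 x + f4 x)
      = (∫ x, f1 x) + (∫ x, f2 x) + (∫ x, f3 x) + ∫ x, f4 x := by
  have i12 : Integrable (fun x => f1 x + f2 x) := h1.add h2
  have i123 : Integrable (fun x => f1 x + f2 x + f3 x) := i12.add h3
  rw [integral_add i123 h4, integral_add i12 h3, integral_add h1 h2]

lemma vaux_int_prod {ψ f1 f2 g : ℝ → ℝ} {M K1 K2 : ℝ}
    (hψ : Continuous ψ) (h1 : Continuous f1) (h2 : Continuous f2)
    (hψM : ∀ x, |ψ x| ≤ M) (hb1 : ∀ x, |f1 x| ≤ K1 * g x) (hb2 : ∀ x, |f2 x| ≤ K2 * g x)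
    (hg2 : Integrable (fun x => g x ^ 2)) :
    Integrable (fun x => ψ x * (f1 x * f2 x)) := by
  have hM0 : 0 ≤ M := (abs_nonneg _).trans (hψM 0)
  refine vaux_integrable_of_le (K := M * (K1 * K2)) hg2
    ((hψ.mul (h1.mul h2))).aestronglyMeasurable (fun x => ?_)
  have e1 : |f1 x * f2 x| ≤ (K1 * g x) * (K2 * g x) := by
    rw [abs_mul]
    exact mul_le_mul (hb1 x) (hb2 x) (abs_nonneg _) ((abs_nonneg _).trans (hb1 x))
  calc |ψ x * (f1 x * f2 x)| = |ψ x| * |f1 x * f2 x| := abs_mul _ _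
    _ ≤ M * ((K1 * g x) * (K2 * g x)) := mul_le_mul (hψM x) e1 (abs_nonneg _) hM0
    _ = M * (K1 * K2) * g x ^ 2 := by ring

noncomputable def vauxG (p : ℝ) (u : ℝ → ℝ → ℝ) (s : ℝ) : ℝ → ℝ :=
  fun x' => -(deriv (deriv (u s)) x') + u s x' - |u s x'| ^ p * u s x'

set_option maxHeartbeats 2000000 in
/-- Localized virial identity for `I₂(t) = ∫ φ(x - y(t)) u v dx`, where
`(u,v)` solves the generalized Boussinesq system
`∂ₜu = ∂ₓv`, `∂ₜv = ∂ₓ(-∂ₓ²u + u - |u|^p u)` on an open interval `I`. -/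
theorem virial_identity_I2 (p : ℝ) (hp : 0 < p)
    (I : Set ℝ) (hIopen : IsOpen I) (hIconn : I.OrdConnected)
    (u v : ℝ → ℝ → ℝ)
    (hu : ContDiffOn ℝ 1 (fun q : ℝ × ℝ => u q.1 q.2) (I ×ˢ Set.univ))
    (hv : ContDiffOn ℝ 1 (fun q : ℝ × ℝ => v q.1 q.2) (I ×ˢ Set.univ))
    (hu3 : ∀ t ∈ I, ContDiff ℝ 3 (u t))
    (heq1 : ∀ t ∈ I, ∀ x : ℝ, deriv (fun s => u s x) t = deriv (v t) x)
    (heq2 : ∀ t ∈ I, ∀ x : ℝ,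
      deriv (fun s => v s x) t
        = deriv (fun x' => -(deriv (deriv (u t)) x') + u t x'
            - |u t x'| ^ p * u t x') x)
    (hdom : ∀ t₀ ∈ I, ∃ δ > 0, ∃ g : ℝ → ℝ,
      Integrable g ∧ Integrable (fun x => (g x) ^ 2) ∧
      ∀ t ∈ I, |t - t₀| < δ → ∀ x : ℝ,
        |u t x| ≤ g x ∧ |v t x| ≤ g x ∧ |deriv (u t) x| ≤ g x ∧
        |deriv (deriv (u t)) x| ≤ g x ∧
        |deriv (deriv (deriv (u t))) x| ≤ g x ∧ |deriv (v t) x| ≤ g x)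
    (hdecay : ∀ t ∈ I,
      Tendsto (u t) (cocompact ℝ) (nhds 0) ∧
      Tendsto (v t) (cocompact ℝ) (nhds 0) ∧
      Tendsto (deriv (u t)) (cocompact ℝ) (nhds 0) ∧
      Tendsto (deriv (deriv (u t))) (cocompact ℝ) (nhds 0) ∧
      Tendsto (deriv (deriv (deriv (u t)))) (cocompact ℝ) (nhds 0) ∧
      Tendsto (deriv (v t)) (cocompact ℝ) (nhds 0))
    (φ : ℝ → ℝ) (hφ : ContDiff ℝ 3 φ)
    (hφbdd : ∃ M : ℝ, ∀ x : ℝ, |φ x| ≤ M ∧ |deriv φ x| ≤ M ∧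
      |deriv (deriv φ) x| ≤ M ∧ |deriv (deriv (deriv φ)) x| ≤ M)
    (y : ℝ → ℝ) (hy : ContDiffOn ℝ 1 y I) :
    ∀ t ∈ I,
      HasDerivAt (fun s => ∫ x : ℝ, φ (x - y s) * u s x * v s x)
        (-(deriv y t) * (∫ x : ℝ, deriv φ (x - y t) * u t x * v t x)
          - (1 / 2) * (∫ x : ℝ, deriv φ (x - y t) *
              (3 * (deriv (u t) x) ^ 2 + (v t x) ^ 2 + (u t x) ^ 2
                - (2 * (p + 1) / (p + 2)) * |u t x| ^ (p + 2)))
          + (1 / 2) * ∫ x : ℝ, deriv (deriv (deriv φ)) (x - y t) * (u t x) ^ 2)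
        t := by
  intro t ht
  obtain ⟨M, hM⟩ := hφbdd
  have hM0 : (0:ℝ) ≤ M := (abs_nonneg _).trans (hM 0).1
  obtain ⟨δ, hδ0, g, hg1, hg2, hgbd⟩ := hdom t ht
  have htt : |t - t| < δ := by simpa using hδ0
  have hgnn : ∀ x, 0 ≤ g x := fun x => (abs_nonneg _).trans (hgbd t ht htt x).1
  -- radius
  obtain ⟨ε₁, hε₁0, hball₁⟩ := Metric.isOpen_iff.1 hIopen t ht
  set r : ℝ := min ε₁ δ / 2 with hrdef
  have hr0 : 0 < r := by positivity
  have hrI : Metric.closedBall t r ⊆ I := by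
    intro s hs
    apply hball₁
    have h1 : dist s t ≤ r := Metric.mem_closedBall.1 hs
    have h2 : r < ε₁ := by
      have := min_le_left ε₁ δ
      have hm : 0 < min ε₁ δ := lt_min hε₁0 hδ0
      rw [hrdef]; linarith
    exact Metric.mem_ball.2 (lt_of_le_of_lt h1 h2)
  have hrδ : ∀ s ∈ Metric.closedBall t r, |s - t| < δ := by
    intro s hs
    have h1 : dist s t ≤ r := Metric.mem_closedBall.1 hs
    rw [Real.dist_eq] at h1
    have h2 : r < δ := by
      have := min_le_right ε₁ δ
      rw [hrdef]; linarith
    linarith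
  -- φ regularity
  obtain ⟨hφd1, hφd2, hφd3, hφc0, hφc1, hφc2, hφc3⟩ := vaux_reg3 hφ
  -- v regularity on I
  have hvC1 : ∀ s ∈ I, ContDiff ℝ 1 (v s) := by
    intro s hs
    rw [← contDiffOn_univ]
    have hmap : Set.MapsTo (fun x : ℝ => (s, x)) Set.univ (I ×ˢ Set.univ) :=
      fun x _ => ⟨hs, trivial⟩
    exact hv.comp ((contDiff_const.prodMk contDiff_id).contDiffOn) hmap
  -- deriv y bounded on the closed ball
  have hyc : ContinuousOn (deriv y) I := hy.continuousOn_deriv_of_isOpen hIopen le_rfl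
  obtain ⟨Y, hY⟩ := (isCompact_closedBall t r).exists_bound_of_continuousOn (hyc.mono hrI)
  have hY0 : (0:ℝ) ≤ Y :=
    (norm_nonneg _).trans (hY t (Metric.mem_closedBall_self hr0.le))
  -- uniform sup bound
  set Cb : ℝ := Real.sqrt (2 * ∫ x, g x ^ 2) with hCbdef
  have hCb0 : 0 ≤ Cb := Real.sqrt_nonneg _
  have hCbound : ∀ s ∈ I, |s - t| < δ → ∀ x, |u s x| ≤ Cb := by
    intro s hs hsδ x
    obtain ⟨R1, R2, R3, Rc0, Rc1, Rc2, Rc3⟩ := vaux_reg3 (hu3 s hs)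
    have hsq := vaux_sq_le R1 Rc1 (fun x => (hgbd s hs hsδ x).1)
      (fun x => (hgbd s hs hsδ x).2.2.1) hg2
      ((hdecay s hs).1.mono_left _root_.atTop_le_cocompact) x
    calc |u s x| = Real.sqrt ((u s x) ^ 2) := (Real.sqrt_sq_eq_abs _).symm
      _ ≤ Cb := Real.sqrt_le_sqrt hsq
  have hCp0 : (0:ℝ) ≤ Cb ^ p := Real.rpow_nonneg hCb0 p
  -- derivative of G
  have hGd : ∀ s ∈ I, ∀ x, HasDerivAt (vauxG p u s)
      (-(deriv (deriv (deriv (u s))) x) + deriv (u s) x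
        - (p + 1) * |u s x| ^ p * deriv (u s) x) x := by
    intro s hs x
    obtain ⟨R1, R2, R3, Rc0, Rc1, Rc2, Rc3⟩ := vaux_reg3 (hu3 s hs)
    have hN : HasDerivAt (fun x => |u s x| ^ p * u s x)
        ((p + 1) * |u s x| ^ p * deriv (u s) x) x := by
      have h := (vaux_hasDerivAt_abs_rpow_mul hp (u s x)).comp x (R1 x)
      simpa [Function.comp_def, mul_assoc] using h
    exact ((R3 x).neg.add (R1 x)).sub hN
  have hGderiv : ∀ s ∈ I, ∀ x, deriv (vauxG p u s) x
      = -(deriv (deriv (deriv (u s))) x) + deriv (u s) x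
        - (p + 1) * |u s x| ^ p * deriv (u s) x := fun s hs x => (hGd s hs x).deriv
  have hGbd : ∀ s ∈ I, |s - t| < δ → ∀ x,
      |deriv (vauxG p u s) x| ≤ (2 + (p + 1) * Cb ^ p) * g x := by
    intro s hs hsδ x
    rw [hGderiv s hs x]
    obtain ⟨B1, B2, B3, B4, B5, B6⟩ := hgbd s hs hsδ x
    have hup : |u s x| ^ p ≤ Cb ^ p :=
      Real.rpow_le_rpow (abs_nonneg _) (hCbound s hs hsδ x) hp.le
    have hc : |(p + 1) * |u s x| ^ p * deriv (u s) x| ≤ (p + 1) * Cb ^ p * g x := by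
      rw [abs_mul, abs_mul, abs_of_pos (by positivity : (0:ℝ) < p + 1),
        abs_of_nonneg (Real.rpow_nonneg (abs_nonneg _) p)]
      exact mul_le_mul (mul_le_mul_of_nonneg_left hup (by positivity)) B3
        (abs_nonneg _) (by positivity)
    calc |(-(deriv (deriv (deriv (u s))) x) + deriv (u s) x
            - (p + 1) * |u s x| ^ p * deriv (u s) x)|
        ≤ |(-(deriv (deriv (deriv (u s))) x) + deriv (u s) x)|
            + |(p + 1) * |u s x| ^ p * deriv (u s) x| := abs_sub _ _
      _ ≤ (|deriv (deriv (deriv (u s))) x| + |deriv (u s) x|)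
            + |(p + 1) * |u s x| ^ p * deriv (u s) x| := by
          refine add_le_add_left ?_ _
          refine (abs_add_le _ _).trans ?_
          rw [abs_neg]
      _ ≤ (g x + g x) + (p + 1) * Cb ^ p * g x := add_le_add (add_le_add B5 B3) hc
      _ = (2 + (p + 1) * Cb ^ p) * g x := by ring
  -- bound constant
  set K : ℝ := Y * M + M * (3 + (p + 1) * Cb ^ p) with hKdef
  -- hypotheses for differentiation under the integral sign
  have hFmeas : ∀ᶠ s in nhds t, AEStronglyMeasurable
      (fun x : ℝ => φ (x - y s) * u s x * v s x) (volume : Measure ℝ) := by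
    filter_upwards [hIopen.mem_nhds ht] with s hs
    have hc1 : Continuous (fun x : ℝ => φ (x - y s)) :=
      hφc0.comp (continuous_sub_right (y s))
    exact ((hc1.mul (hu3 s hs).continuous).mul (hvC1 s hs).continuous).aestronglyMeasurable
  have hFint : Integrable (fun x : ℝ => φ (x - y t) * u t x * v t x) := by
    have hc1 : Continuous (fun x : ℝ => φ (x - y t)) :=
      hφc0.comp (continuous_sub_right (y t))
    have h := vaux_int_prod (K1 := 1) (K2 := 1) hc1 (hu3 t ht).continuous
      (hvC1 t ht).continuous (fun x => (hM (x - y t)).1)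
      (fun x => by rw [one_mul]; exact (hgbd t ht htt x).1)
      (fun x => by rw [one_mul]; exact (hgbd t ht htt x).2.1) hg2
    exact h.congr (Eventually.of_forall fun x => by ring)
  have hF'meas : AEStronglyMeasurable
      (fun x : ℝ => -(deriv y t) * deriv φ (x - y t) * (u t x * v t x)
        + φ (x - y t) * (deriv (v t) x * v t x + u t x * deriv (vauxG p u t) x))
      (volume : Measure ℝ) := by
    obtain ⟨W1, W2, W3, Wc0, Wc1, Wc2, Wc3⟩ := vaux_reg3 (hu3 t ht)
    have hνc : Continuous (v t) := (hvC1 t ht).continuous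
    have hν1c : Continuous (deriv (v t)) := (hvC1 t ht).continuous_deriv le_rfl
    have hNc : Continuous (fun x => |u t x| ^ p) := (vaux_cont_abs_rpow hp.le).comp Wc0
    have hGc : Continuous (fun x => deriv (vauxG p u t) x) := by
      have he : (fun x => deriv (vauxG p u t) x)
          = fun x => -(deriv (deriv (deriv (u t))) x) + deriv (u t) x
              - (p + 1) * |u t x| ^ p * deriv (u t) x := funext (hGderiv t ht)
      rw [he]
      exact (Wc3.neg.add Wc1).sub ((continuous_const.mul hNc).mul Wc1)
    have hc1 : Continuous (fun x : ℝ => φ (x - y t)) :=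
      hφc0.comp (continuous_sub_right (y t))
    have hc2 : Continuous (fun x : ℝ => deriv φ (x - y t)) :=
      hφc1.comp (continuous_sub_right (y t))
    exact (((continuous_const.mul hc2).mul (Wc0.mul hνc)).add
      (hc1.mul ((hν1c.mul hνc).add (Wc0.mul hGc)))).aestronglyMeasurable
  have hbound : ∀ᵐ x : ℝ ∂(volume : Measure ℝ), ∀ s ∈ Metric.ball t r,
      ‖-(deriv y s) * deriv φ (x - y s) * (u s x * v s x)
        + φ (x - y s) * (deriv (v s) x * v s x + u s x * deriv (vauxG p u s) x)‖
        ≤ K * g x ^ 2 := by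
    refine Eventually.of_forall fun x s hs => ?_
    have hsI : s ∈ I := hrI (Metric.ball_subset_closedBall hs)
    have hsδ : |s - t| < δ := hrδ s (Metric.ball_subset_closedBall hs)
    obtain ⟨B1, B2, B3, B4, B5, B6⟩ := hgbd s hsI hsδ x
    have hYs : |deriv y s| ≤ Y := by
      have h := hY s (Metric.ball_subset_closedBall hs)
      rwa [Real.norm_eq_abs] at h
    have hGb := hGbd s hsI hsδ x
    have hgx : 0 ≤ g x := hgnn x
    rw [Real.norm_eq_abs]
    have t1 : |(-(deriv y s)) * deriv φ (x - y s) * (u s x * v s x)|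
        ≤ Y * M * (g x * g x) := by
      rw [abs_mul, abs_mul, abs_neg, abs_mul]
      exact mul_le_mul (mul_le_mul hYs (hM _).2.1 (abs_nonneg _) hY0)
        (mul_le_mul B1 B2 (abs_nonneg _) hgx)
        (mul_nonneg (abs_nonneg _) (abs_nonneg _)) (by positivity)
    have t2 : |φ (x - y s) * (deriv (v s) x * v s x + u s x * deriv (vauxG p u s) x)|
        ≤ M * (g x * g x + g x * ((2 + (p + 1) * Cb ^ p) * g x)) := by
      rw [abs_mul]
      refine mul_le_mul (hM _).1 ?_ (abs_nonneg _) hM0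
      refine (abs_add_le _ _).trans ?_
      refine add_le_add ?_ ?_
      · rw [abs_mul]; exact mul_le_mul B6 B2 (abs_nonneg _) hgx
      · rw [abs_mul]; exact mul_le_mul B1 hGb (abs_nonneg _) hgx
    calc |(-(deriv y s) * deriv φ (x - y s) * (u s x * v s x)
          + φ (x - y s) * (deriv (v s) x * v s x + u s x * deriv (vauxG p u s) x))|
        ≤ |(-(deriv y s)) * deriv φ (x - y s) * (u s x * v s x)|
          + |φ (x - y s) * (deriv (v s) x * v s x + u s x * deriv (vauxG p u s) x)| :=
          abs_add_le _ _
      _ ≤ Y * M * (g x * g x)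
          + M * (g x * g x + g x * ((2 + (p + 1) * Cb ^ p) * g x)) := add_le_add t1 t2
      _ = K * g x ^ 2 := by rw [hKdef]; ring
  have hbint : Integrable (fun x : ℝ => K * g x ^ 2) := hg2.const_mul K
  have hdiff : ∀ᵐ x : ℝ ∂(volume : Measure ℝ), ∀ s ∈ Metric.ball t r,
      HasDerivAt (fun s' => φ (x - y s') * u s' x * v s' x)
        (-(deriv y s) * deriv φ (x - y s) * (u s x * v s x)
          + φ (x - y s) * (deriv (v s) x * v s x + u s x * deriv (vauxG p u s) x)) s := by
    refine Eventually.of_forall fun x s hs => ?_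
    have hsI : s ∈ I := hrI (Metric.ball_subset_closedBall hs)
    have hyd : HasDerivAt y (deriv y s) s :=
      ((hy.differentiableOn one_ne_zero).differentiableAt (hIopen.mem_nhds hsI)).hasDerivAt
    have hφs : HasDerivAt (fun s' => φ (x - y s')) (deriv φ (x - y s) * (0 - deriv y s)) s :=
      (hφd1 (x - y s)).comp s ((hasDerivAt_const s x).sub hyd)
    have hUs : HasDerivAt (fun s' => u s' x) (deriv (v s) x) s := by
      have hdua : DifferentiableAt ℝ (fun s' => u s' x) s := by
        have hj : DifferentiableAt ℝ (fun q : ℝ × ℝ => u q.1 q.2) (s, x) :=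
          (hu.differentiableOn one_ne_zero).differentiableAt
            ((hIopen.prod isOpen_univ).mem_nhds ⟨hsI, trivial⟩)
        exact hj.comp s (differentiableAt_id.prodMk (differentiableAt_const (𝕜 := ℝ) x))
      have h := hdua.hasDerivAt
      rwa [heq1 s hsI x] at h
    have hVs : HasDerivAt (fun s' => v s' x) (deriv (vauxG p u s) x) s := by
      have hdva : DifferentiableAt ℝ (fun s' => v s' x) s := by
        have hj : DifferentiableAt ℝ (fun q : ℝ × ℝ => v q.1 q.2) (s, x) :=
          (hv.differentiableOn one_ne_zero).differentiableAt
            ((hIopen.prod isOpen_univ).mem_nhds ⟨hsI, trivial⟩)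
        exact hj.comp s (differentiableAt_id.prodMk (differentiableAt_const (𝕜 := ℝ) x))
      have h := hdva.hasDerivAt
      rw [heq2 s hsI x] at h
      exact h
    have h := (hφs.fun_mul hUs).fun_mul hVs
    refine h.congr_deriv ?_
    ring
  have main := hasDerivAt_integral_of_dominated_loc_of_deriv_le (μ := (volume : Measure ℝ))
    (x₀ := t)
    (F := fun s x => φ (x - y s) * u s x * v s x)
    (F' := fun s x => -(deriv y s) * deriv φ (x - y s) * (u s x * v s x)
      + φ (x - y s) * (deriv (v s) x * v s x + u s x * deriv (vauxG p u s) x))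
    (bound := fun x => K * g x ^ 2)
    (Metric.ball_mem_nhds t hr0) hFmeas hFint hF'meas hbound hbint hdiff
  have HD2 : HasDerivAt (fun s => ∫ x : ℝ, φ (x - y s) * u s x * v s x)
      (∫ x : ℝ, (-(deriv y t) * deriv φ (x - y t) * (u t x * v t x)
        + φ (x - y t) * (deriv (v t) x * v t x + u t x * deriv (vauxG p u t) x))) t := main.2
  -- ===== value identification at time t =====
  obtain ⟨W1, W2, W3, Wc0, Wc1, Wc2, Wc3⟩ := vaux_reg3 (hu3 t ht)
  have hνC1 : ContDiff ℝ 1 (v t) := hvC1 t ht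
  have hνd : ∀ x, HasDerivAt (v t) (deriv (v t) x) x :=
    fun x => (hνC1.differentiable one_ne_zero x).hasDerivAt
  have hνc : Continuous (v t) := hνC1.continuous
  have hν1c : Continuous (deriv (v t)) := hνC1.continuous_deriv le_rfl
  have hNc : Continuous (fun x => |u t x| ^ p) := (vaux_cont_abs_rpow hp.le).comp Wc0
  obtain ⟨du0, dv0, du1, du2, du3, dv1⟩ := hdecay t ht
  have dubot : Tendsto (u t) atBot (nhds 0) := du0.mono_left _root_.atBot_le_cocompact
  have dutop : Tendsto (u t) atTop (nhds 0) := du0.mono_left _root_.atTop_le_cocompact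
  have dvbot : Tendsto (v t) atBot (nhds 0) := dv0.mono_left _root_.atBot_le_cocompact
  have dvtop : Tendsto (v t) atTop (nhds 0) := dv0.mono_left _root_.atTop_le_cocompact
  have du1bot : Tendsto (deriv (u t)) atBot (nhds 0) := du1.mono_left _root_.atBot_le_cocompact
  have du1top : Tendsto (deriv (u t)) atTop (nhds 0) := du1.mono_left _root_.atTop_le_cocompact
  have hNtend0 : Tendsto (fun x => |u t x| ^ p * u t x) (cocompact ℝ) (nhds 0) := by
    have hc : Continuous (fun r : ℝ => |r| ^ p * r) :=
      (vaux_cont_abs_rpow hp.le).mul continuous_id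
    have h := (hc.tendsto 0).comp du0
    simpa [Function.comp_def, Real.zero_rpow hp.ne'] using h
  have B1 : ∀ x, |u t x| ≤ g x := fun x => (hgbd t ht htt x).1
  have B2 : ∀ x, |v t x| ≤ g x := fun x => (hgbd t ht htt x).2.1
  have B3 : ∀ x, |deriv (u t) x| ≤ g x := fun x => (hgbd t ht htt x).2.2.1
  have B4 : ∀ x, |deriv (deriv (u t)) x| ≤ g x := fun x => (hgbd t ht htt x).2.2.2.1
  have B5 : ∀ x, |deriv (deriv (deriv (u t))) x| ≤ g x := fun x => (hgbd t ht htt x).2.2.2.2.1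
  have B6 : ∀ x, |deriv (v t) x| ≤ g x := fun x => (hgbd t ht htt x).2.2.2.2.2
  have B1' : ∀ x, |u t x| ≤ 1 * g x := fun x => by rw [one_mul]; exact B1 x
  have B2' : ∀ x, |v t x| ≤ 1 * g x := fun x => by rw [one_mul]; exact B2 x
  have B3' : ∀ x, |deriv (u t) x| ≤ 1 * g x := fun x => by rw [one_mul]; exact B3 x
  have B4' : ∀ x, |deriv (deriv (u t)) x| ≤ 1 * g x := fun x => by rw [one_mul]; exact B4 x
  have B5' : ∀ x, |deriv (deriv (deriv (u t))) x| ≤ 1 * g x := fun x => by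
    rw [one_mul]; exact B5 x
  have B6' : ∀ x, |deriv (v t) x| ≤ 1 * g x := fun x => by rw [one_mul]; exact B6 x
  have hNbd : ∀ x, |(|u t x| ^ p * u t x)| ≤ Cb ^ p * g x := fun x => by
    rw [abs_mul, abs_of_nonneg (Real.rpow_nonneg (abs_nonneg _) p)]
    exact mul_le_mul (Real.rpow_le_rpow (abs_nonneg _) (hCbound t ht htt x) hp.le)
      (B1 x) (abs_nonneg _) hCp0
  -- translated φ facts
  have hP0d : ∀ x, HasDerivAt (fun x' => φ (x' - y t)) (deriv φ (x - y t)) x := fun x => by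
    have h := (hφd1 (x - y t)).comp x ((hasDerivAt_id x).sub_const (y t))
    simpa [Function.comp_def] using h
  have hP1d : ∀ x, HasDerivAt (fun x' => deriv φ (x' - y t))
      (deriv (deriv φ) (x - y t)) x := fun x => by
    have h := (hφd2 (x - y t)).comp x ((hasDerivAt_id x).sub_const (y t))
    simpa [Function.comp_def] using h
  have hP2d : ∀ x, HasDerivAt (fun x' => deriv (deriv φ) (x' - y t))
      (deriv (deriv (deriv φ)) (x - y t)) x := fun x => by
    have h := (hφd3 (x - y t)).comp x ((hasDerivAt_id x).sub_const (y t))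
    simpa [Function.comp_def] using h
  have hP0c : Continuous (fun x : ℝ => φ (x - y t)) := hφc0.comp (continuous_sub_right (y t))
  have hP1c : Continuous (fun x : ℝ => deriv φ (x - y t)) :=
    hφc1.comp (continuous_sub_right (y t))
  have hP2c : Continuous (fun x : ℝ => deriv (deriv φ) (x - y t)) :=
    hφc2.comp (continuous_sub_right (y t))
  have hP3c : Continuous (fun x : ℝ => deriv (deriv (deriv φ)) (x - y t)) :=
    hφc3.comp (continuous_sub_right (y t))
  have hP0M : ∀ x : ℝ, |φ (x - y t)| ≤ M := fun x => (hM _).1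
  have hP1M : ∀ x : ℝ, |deriv φ (x - y t)| ≤ M := fun x => (hM _).2.1
  have hP2M : ∀ x : ℝ, |deriv (deriv φ) (x - y t)| ≤ M := fun x => (hM _).2.2.1
  have hP3M : ∀ x : ℝ, |deriv (deriv (deriv φ)) (x - y t)| ≤ M := fun x => (hM _).2.2.2
  -- integrability instances
  have i6 : Integrable (fun x => φ (x - y t) * (deriv (u t) x * deriv (deriv (u t)) x)) :=
    vaux_int_prod hP0c Wc1 Wc2 hP0M B3' B4' hg2
  have iT3 : Integrable (fun x => φ (x - y t) * (u t x * deriv (deriv (deriv (u t))) x)) :=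
    vaux_int_prod hP0c Wc0 Wc3 hP0M B1' B5' hg2
  have i7 : Integrable (fun x => deriv φ (x - y t) * (u t x * deriv (deriv (u t)) x)) :=
    vaux_int_prod hP1c Wc0 Wc2 hP1M B1' B4' hg2
  have i8 : Integrable (fun x => deriv φ (x - y t) * (deriv (u t) x * deriv (u t) x)) :=
    vaux_int_prod hP1c Wc1 Wc1 hP1M B3' B3' hg2
  have iT1 : Integrable (fun x => deriv φ (x - y t) * (u t x * v t x)) :=
    vaux_int_prod hP1c Wc0 hνc hP1M B1' B2' hg2
  have iT2 : Integrable (fun x => φ (x - y t) * (v t x * deriv (v t) x)) :=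
    vaux_int_prod hP0c hνc hν1c hP0M B2' B6' hg2
  have iT4 : Integrable (fun x => φ (x - y t) * (u t x * deriv (u t) x)) :=
    vaux_int_prod hP0c Wc0 Wc1 hP0M B1' B3' hg2
  have iT5 : Integrable (fun x => φ (x - y t) * (|u t x| ^ p * u t x * deriv (u t) x)) :=
    vaux_int_prod hP0c (hNc.mul Wc0) Wc1 hP0M hNbd B3' hg2
  have i10 : Integrable (fun x => deriv φ (x - y t) * (v t x * v t x)) :=
    vaux_int_prod hP1c hνc hνc hP1M B2' B2' hg2
  have i11 : Integrable (fun x => deriv φ (x - y t) * (u t x * u t x)) :=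
    vaux_int_prod hP1c Wc0 Wc0 hP1M B1' B1' hg2
  have i12 : Integrable (fun x => deriv φ (x - y t) * (|u t x| ^ p * u t x * u t x)) :=
    vaux_int_prod hP1c (hNc.mul Wc0) Wc0 hP1M hNbd B1' hg2
  -- integration by parts identities
  have E2 : (∫ x, φ (x - y t) * (v t x * deriv (v t) x))
      = -(1/2) * ∫ x, deriv φ (x - y t) * v t x ^ 2 :=
    vaux_ibp_half hP0d hνd hP1c hν1c hP0M hP1M B2 B6 hg2 dvbot dvtop
  have E4 : (∫ x, φ (x - y t) * (u t x * deriv (u t) x))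
      = -(1/2) * ∫ x, deriv φ (x - y t) * u t x ^ 2 :=
    vaux_ibp_half hP0d W1 hP1c Wc1 hP0M hP1M B1 B3 hg2 dubot dutop
  have E6 : (∫ x, φ (x - y t) * (deriv (u t) x * deriv (deriv (u t)) x))
      = -(1/2) * ∫ x, deriv φ (x - y t) * deriv (u t) x ^ 2 :=
    vaux_ibp_half hP0d W2 hP1c Wc2 hP0M hP1M B3 B4 hg2 du1bot du1top
  have E9 : (∫ x, deriv (deriv φ) (x - y t) * (u t x * deriv (u t) x))
      = -(1/2) * ∫ x, deriv (deriv (deriv φ)) (x - y t) * u t x ^ 2 :=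
    vaux_ibp_half hP2d W1 hP3c Wc1 hP2M hP3M B1 B3 hg2 dubot dutop
  -- K3
  have hK3d : ∀ x, HasDerivAt (fun x => u t x * deriv (deriv (u t)) x)
      (deriv (u t) x * deriv (deriv (u t)) x + u t x * deriv (deriv (deriv (u t))) x) x :=
    fun x => (W1 x).mul (W3 x)
  have hK3bd : ∀ x, |u t x * deriv (deriv (u t)) x| ≤ 2 * g x ^ 2 := fun x => by
    rw [abs_mul]
    have h1 := mul_le_mul (B1 x) (B4 x) (abs_nonneg _) (hgnn x)
    nlinarith [sq_nonneg (g x)]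
  have hK3bd' : ∀ x, |deriv (u t) x * deriv (deriv (u t)) x
      + u t x * deriv (deriv (deriv (u t))) x| ≤ 2 * g x ^ 2 := fun x => by
    have h1 := mul_le_mul (B3 x) (B4 x) (abs_nonneg _) (hgnn x)
    have h2 := mul_le_mul (B1 x) (B5 x) (abs_nonneg _) (hgnn x)
    calc |deriv (u t) x * deriv (deriv (u t)) x + u t x * deriv (deriv (deriv (u t))) x|
        ≤ |deriv (u t) x * deriv (deriv (u t)) x|
          + |u t x * deriv (deriv (deriv (u t))) x| := abs_add_le _ _
      _ = |deriv (u t) x| * |deriv (deriv (u t)) x|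
          + |u t x| * |deriv (deriv (deriv (u t))) x| := by rw [abs_mul, abs_mul]
      _ ≤ g x * g x + g x * g x := add_le_add h1 h2
      _ = 2 * g x ^ 2 := by ring
  have hK3tb : Tendsto (fun x => u t x * deriv (deriv (u t)) x) atBot (nhds 0) := by
    have h := (du0.mul du2).mono_left _root_.atBot_le_cocompact
    simpa using h
  have hK3tt : Tendsto (fun x => u t x * deriv (deriv (u t)) x) atTop (nhds 0) := by
    have h := (du0.mul du2).mono_left _root_.atTop_le_cocompact
    simpa using h
  have K3raw : (∫ x, φ (x - y t) * (deriv (u t) x * deriv (deriv (u t)) x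
        + u t x * deriv (deriv (deriv (u t))) x))
      = - ∫ x, deriv φ (x - y t) * (u t x * deriv (deriv (u t)) x) :=
    vaux_key hP0d hK3d hP1c ((Wc1.mul Wc2).add (Wc0.mul Wc3)) hP0M hP1M hK3bd hK3bd'
      hg2 hK3tb hK3tt
  have eqK3 : (∫ x, φ (x - y t) * (deriv (u t) x * deriv (deriv (u t)) x))
      + (∫ x, φ (x - y t) * (u t x * deriv (deriv (deriv (u t))) x))
      = - ∫ x, deriv φ (x - y t) * (u t x * deriv (deriv (u t)) x) := by
    have h1 : ∫ x, (φ (x - y t) * (deriv (u t) x * deriv (deriv (u t)) x)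
          + φ (x - y t) * (u t x * deriv (deriv (deriv (u t))) x))
        = (∫ x, φ (x - y t) * (deriv (u t) x * deriv (deriv (u t)) x))
          + ∫ x, φ (x - y t) * (u t x * deriv (deriv (deriv (u t))) x) :=
      MeasureTheory.integral_add i6 iT3
    have h2 : (∫ x, φ (x - y t) * (deriv (u t) x * deriv (deriv (u t)) x
          + u t x * deriv (deriv (deriv (u t))) x))
        = ∫ x, (φ (x - y t) * (deriv (u t) x * deriv (deriv (u t)) x)
          + φ (x - y t) * (u t x * deriv (deriv (deriv (u t))) x)) :=
      vaux_int_congr fun x => by ring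
    linarith [K3raw, h1, h2]
  -- K7
  have hK7d : ∀ x, HasDerivAt (fun x => u t x * deriv (u t) x)
      (deriv (u t) x * deriv (u t) x + u t x * deriv (deriv (u t)) x) x :=
    fun x => (W1 x).mul (W2 x)
  have hK7bd : ∀ x, |u t x * deriv (u t) x| ≤ 2 * g x ^ 2 := fun x => by
    rw [abs_mul]
    have h1 := mul_le_mul (B1 x) (B3 x) (abs_nonneg _) (hgnn x)
    nlinarith [sq_nonneg (g x)]
  have hK7bd' : ∀ x, |deriv (u t) x * deriv (u t) x + u t x * deriv (deriv (u t)) x|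
      ≤ 2 * g x ^ 2 := fun x => by
    have h1 := mul_le_mul (B3 x) (B3 x) (abs_nonneg _) (hgnn x)
    have h2 := mul_le_mul (B1 x) (B4 x) (abs_nonneg _) (hgnn x)
    calc |deriv (u t) x * deriv (u t) x + u t x * deriv (deriv (u t)) x|
        ≤ |deriv (u t) x * deriv (u t) x| + |u t x * deriv (deriv (u t)) x| := abs_add_le _ _
      _ = |deriv (u t) x| * |deriv (u t) x| + |u t x| * |deriv (deriv (u t)) x| := by
          rw [abs_mul, abs_mul]
      _ ≤ g x * g x + g x * g x := add_le_add h1 h2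
      _ = 2 * g x ^ 2 := by ring
  have hK7tb : Tendsto (fun x => u t x * deriv (u t) x) atBot (nhds 0) := by
    have h := (du0.mul du1).mono_left _root_.atBot_le_cocompact
    simpa using h
  have hK7tt : Tendsto (fun x => u t x * deriv (u t) x) atTop (nhds 0) := by
    have h := (du0.mul du1).mono_left _root_.atTop_le_cocompact
    simpa using h
  have K7raw : (∫ x, deriv φ (x - y t) * (deriv (u t) x * deriv (u t) x
        + u t x * deriv (deriv (u t)) x))
      = - ∫ x, deriv (deriv φ) (x - y t) * (u t x * deriv (u t) x) :=
    vaux_key hP1d hK7d hP2c ((Wc1.mul Wc1).add (Wc0.mul Wc2)) hP1M hP2M hK7bd hK7bd'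
      hg2 hK7tb hK7tt
  have eqK7 : (∫ x, deriv φ (x - y t) * (deriv (u t) x * deriv (u t) x))
      + (∫ x, deriv φ (x - y t) * (u t x * deriv (deriv (u t)) x))
      = - ∫ x, deriv (deriv φ) (x - y t) * (u t x * deriv (u t) x) := by
    have h1 : ∫ x, (deriv φ (x - y t) * (deriv (u t) x * deriv (u t) x)
          + deriv φ (x - y t) * (u t x * deriv (deriv (u t)) x))
        = (∫ x, deriv φ (x - y t) * (deriv (u t) x * deriv (u t) x))
          + ∫ x, deriv φ (x - y t) * (u t x * deriv (deriv (u t)) x) :=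
      MeasureTheory.integral_add i8 i7
    have h2 : (∫ x, deriv φ (x - y t) * (deriv (u t) x * deriv (u t) x
          + u t x * deriv (deriv (u t)) x))
        = ∫ x, (deriv φ (x - y t) * (deriv (u t) x * deriv (u t) x)
          + deriv φ (x - y t) * (u t x * deriv (deriv (u t)) x)) :=
      vaux_int_congr fun x => by ring
    linarith [K7raw, h1, h2]
  -- K5
  have hK5d : ∀ x, HasDerivAt (fun x => |u t x| ^ p * u t x * u t x)
      ((p + 2) * (|u t x| ^ p * u t x * deriv (u t) x)) x := fun x => by
    have hN : HasDerivAt (fun x => |u t x| ^ p * u t x)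
        ((p + 1) * |u t x| ^ p * deriv (u t) x) x := by
      have h := (vaux_hasDerivAt_abs_rpow_mul hp (u t x)).comp x (W1 x)
      simpa [Function.comp_def, mul_assoc] using h
    have h2 := hN.mul (W1 x)
    refine h2.congr_deriv ?_
    ring
  have hK5bd : ∀ x, |(|u t x| ^ p * u t x * u t x)| ≤ (p + 2) * Cb ^ p * g x ^ 2 := fun x => by
    rw [abs_mul]
    have h1 := mul_le_mul (hNbd x) (B1 x) (abs_nonneg _) (mul_nonneg hCp0 (hgnn x))
    nlinarith [mul_nonneg (mul_nonneg hCp0 (hgnn x)) (hgnn x), hp.le]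
  have hK5bd' : ∀ x, |(p + 2) * (|u t x| ^ p * u t x * deriv (u t) x)|
      ≤ (p + 2) * Cb ^ p * g x ^ 2 := fun x => by
    rw [abs_mul, abs_mul, abs_of_pos (show (0:ℝ) < p + 2 by positivity)]
    have h1 := mul_le_mul (hNbd x) (B3 x) (abs_nonneg _) (mul_nonneg hCp0 (hgnn x))
    calc (p + 2) * (|(|u t x| ^ p * u t x)| * |deriv (u t) x|)
        ≤ (p + 2) * (Cb ^ p * g x * g x) :=
          mul_le_mul_of_nonneg_left h1 (by positivity)
      _ = (p + 2) * Cb ^ p * g x ^ 2 := by ring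
  have hK5tb : Tendsto (fun x => |u t x| ^ p * u t x * u t x) atBot (nhds 0) := by
    have h := (hNtend0.mul du0).mono_left _root_.atBot_le_cocompact
    simpa using h
  have hK5tt : Tendsto (fun x => |u t x| ^ p * u t x * u t x) atTop (nhds 0) := by
    have h := (hNtend0.mul du0).mono_left _root_.atTop_le_cocompact
    simpa using h
  have K5raw : (∫ x, φ (x - y t) * ((p + 2) * (|u t x| ^ p * u t x * deriv (u t) x)))
      = - ∫ x, deriv φ (x - y t) * (|u t x| ^ p * u t x * u t x) :=
    vaux_key hP0d hK5d hP1c (continuous_const.mul ((hNc.mul Wc0).mul Wc1)) hP0M hP1M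
      hK5bd hK5bd' hg2 hK5tb hK5tt
  have K5eq : (p + 2) * (∫ x, φ (x - y t) * (|u t x| ^ p * u t x * deriv (u t) x))
      = - ∫ x, deriv φ (x - y t) * (|u t x| ^ p * u t x * u t x) := by
    have h1 : ∫ x, ((p + 2) * (φ (x - y t) * (|u t x| ^ p * u t x * deriv (u t) x)))
        = (p + 2) * ∫ x, φ (x - y t) * (|u t x| ^ p * u t x * deriv (u t) x) :=
      MeasureTheory.integral_const_mul _ _
    have h2 : (∫ x, φ (x - y t) * ((p + 2) * (|u t x| ^ p * u t x * deriv (u t) x)))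
        = ∫ x, ((p + 2) * (φ (x - y t) * (|u t x| ^ p * u t x * deriv (u t) x))) :=
      vaux_int_congr fun x => by ring
    linarith [K5raw, h1, h2]
  have ed : (∫ x, deriv φ (x - y t) * (deriv (u t) x * deriv (u t) x))
      = ∫ x, deriv φ (x - y t) * deriv (u t) x ^ 2 :=
    vaux_int_congr fun x => by ring
  have hb3 : (∫ x, φ (x - y t) * (u t x * deriv (deriv (deriv (u t))) x))
      = (3/2) * (∫ x, deriv φ (x - y t) * deriv (u t) x ^ 2)
        - (1/2) * ∫ x, deriv (deriv (deriv φ)) (x - y t) * u t x ^ 2 := by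
    linarith [eqK3, eqK7, E6, E9, ed]
  have hb5 : (∫ x, φ (x - y t) * (|u t x| ^ p * u t x * deriv (u t) x))
      = (- ∫ x, deriv φ (x - y t) * (|u t x| ^ p * u t x * u t x)) / (p + 2) :=
    eq_div_of_mul_eq (by positivity) (by linarith [K5eq])
  -- final splitting and assembly
  have j1 : Integrable (fun x => -(deriv y t) * (deriv φ (x - y t) * (u t x * v t x))) :=
    iT1.const_mul _
  have j3 : Integrable (fun x =>
      (-1 : ℝ) * (φ (x - y t) * (u t x * deriv (deriv (deriv (u t))) x))) :=
    iT3.const_mul _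
  have j5 : Integrable (fun x =>
      (-(p + 1)) * (φ (x - y t) * (|u t x| ^ p * u t x * deriv (u t) x))) :=
    iT5.const_mul _
  have hsplitF : (∫ x, (-(deriv y t) * deriv φ (x - y t) * (u t x * v t x)
        + φ (x - y t) * (deriv (v t) x * v t x + u t x * deriv (vauxG p u t) x)))
      = -(deriv y t) * (∫ x, deriv φ (x - y t) * (u t x * v t x))
        + (∫ x, φ (x - y t) * (v t x * deriv (v t) x))
        + (-1 : ℝ) * (∫ x, φ (x - y t) * (u t x * deriv (deriv (deriv (u t))) x))
        + (∫ x, φ (x - y t) * (u t x * deriv (u t) x))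
        + (-(p + 1)) * ∫ x, φ (x - y t) * (|u t x| ^ p * u t x * deriv (u t) x) := by
    have hpt : (∫ x, (-(deriv y t) * deriv φ (x - y t) * (u t x * v t x)
          + φ (x - y t) * (deriv (v t) x * v t x + u t x * deriv (vauxG p u t) x)))
        = ∫ x, (-(deriv y t) * (deriv φ (x - y t) * (u t x * v t x))
          + φ (x - y t) * (v t x * deriv (v t) x)
          + (-1 : ℝ) * (φ (x - y t) * (u t x * deriv (deriv (deriv (u t))) x))
          + φ (x - y t) * (u t x * deriv (u t) x)
          + (-(p + 1)) * (φ (x - y t) * (|u t x| ^ p * u t x * deriv (u t) x))) :=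
      vaux_int_congr fun x => by rw [hGderiv t ht x]; ring
    rw [hpt, vaux_int5 j1 iT2 j3 iT4 j5, MeasureTheory.integral_const_mul,
      MeasureTheory.integral_const_mul, MeasureTheory.integral_const_mul]
  have i8' : Integrable (fun x => deriv φ (x - y t) * deriv (u t) x ^ 2) :=
    i8.congr (Eventually.of_forall fun x => by ring)
  have j8 : Integrable (fun x => (3:ℝ) * (deriv φ (x - y t) * deriv (u t) x ^ 2)) :=
    i8'.const_mul _
  have i10' : Integrable (fun x => deriv φ (x - y t) * v t x ^ 2) :=
    i10.congr (Eventually.of_forall fun x => by ring)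
  have i11' : Integrable (fun x => deriv φ (x - y t) * u t x ^ 2) :=
    i11.congr (Eventually.of_forall fun x => by ring)
  have j12 : Integrable (fun x => (-(2 * (p + 1) / (p + 2)))
      * (deriv φ (x - y t) * (|u t x| ^ p * u t x * u t x))) := i12.const_mul _
  have hsplitT : (∫ x, deriv φ (x - y t) * (3 * (deriv (u t) x) ^ 2 + (v t x) ^ 2
        + (u t x) ^ 2 - (2 * (p + 1) / (p + 2)) * |u t x| ^ (p + 2)))
      = 3 * (∫ x, deriv φ (x - y t) * deriv (u t) x ^ 2)
        + (∫ x, deriv φ (x - y t) * v t x ^ 2)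
        + (∫ x, deriv φ (x - y t) * u t x ^ 2)
        + (-(2 * (p + 1) / (p + 2)))
          * ∫ x, deriv φ (x - y t) * (|u t x| ^ p * u t x * u t x) := by
    have hpt : (∫ x, deriv φ (x - y t) * (3 * (deriv (u t) x) ^ 2 + (v t x) ^ 2
          + (u t x) ^ 2 - (2 * (p + 1) / (p + 2)) * |u t x| ^ (p + 2)))
        = ∫ x, ((3:ℝ) * (deriv φ (x - y t) * deriv (u t) x ^ 2)
          + deriv φ (x - y t) * v t x ^ 2
          + deriv φ (x - y t) * u t x ^ 2
          + (-(2 * (p + 1) / (p + 2)))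
            * (deriv φ (x - y t) * (|u t x| ^ p * u t x * u t x))) :=
      vaux_int_congr fun x => by rw [← vaux_abs_rpow_mul_self hp (u t x)]; ring
    rw [hpt, vaux_int4 j8 i10' i11' j12, MeasureTheory.integral_const_mul,
      MeasureTheory.integral_const_mul]
  have ha1 : (∫ x, deriv φ (x - y t) * u t x * v t x)
      = ∫ x, deriv φ (x - y t) * (u t x * v t x) := vaux_int_congr fun x => by ring
  have hval : (∫ x : ℝ, (-(deriv y t) * deriv φ (x - y t) * (u t x * v t x)
        + φ (x - y t) * (deriv (v t) x * v t x + u t x * deriv (vauxG p u t) x)))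
      = -(deriv y t) * (∫ x : ℝ, deriv φ (x - y t) * u t x * v t x)
        - (1 / 2) * (∫ x : ℝ, deriv φ (x - y t) *
            (3 * (deriv (u t) x) ^ 2 + (v t x) ^ 2 + (u t x) ^ 2
              - (2 * (p + 1) / (p + 2)) * |u t x| ^ (p + 2)))
        + (1 / 2) * ∫ x : ℝ, deriv (deriv (deriv φ)) (x - y t) * (u t x) ^ 2 := by
    rw [hsplitF, hsplitT, ha1, E2, hb3, E4, hb5]
    ring
  rw [hval] at HD2
  exact HD2
end
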